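/- arXiv:2303.11653 — 5 statements merged into one kernel-verified Lean document; each statement's English description precedes it below -/
import Mathlib

section
/- Let p ≥ q ≥ 1, n = p + q, and let X be an n×n complex Hermitian matrix written in blocks X = [[X₁₁, X₁₂],[X₁₂*, X₂₂]] with X₁₂ of size p×q. Set I_{p,q} = Diag(I_p, −I_q) and X̃ = −I_{p,q} X I_{p,q}. Then X̃ is Hermitian with e(X̃) = e(X)*, one has X + X̃ = 2·[[0, X₁₂],[X₁₂*, 0]] and e(X + X̃) = 2·ŝ^{p,q} where s = s(X₁₂); consequently (e(X), e(X)*, 2·ŝ^{p,q}) ∈ Horn(n). -/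
open Matrix

/-- Eigenvalues of a (Hermitian) complex matrix, listed in decreasing order. -/
noncomputable def eigVec {k : ℕ} (X : Matrix (Fin k) (Fin k) ℂ) (hX : X.IsHermitian) :
    Fin k → ℝ :=
  fun i => hX.eigenvalues (Tuple.sort hX.eigenvalues i.rev)

/-- The `i`-th (0-based) singular value of a rectangular complex matrix:
the square root of the `i`-th largest eigenvalue of `Y * Yᴴ` (and `0` for `i ≥ a`). -/
noncomputable def sval {a b : ℕ} (Y : Matrix (Fin a) (Fin b) ℂ) (i : ℕ) : ℝ :=
  if h : i < a then
    Real.sqrt (eigVec (Y * Yᴴ) (Matrix.isHermitian_mul_conjTranspose_self Y) ⟨i, h⟩)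
  else 0

/-- The Horn cone `Horn(k)`. -/
def Horn (k : ℕ) : Set ((Fin k → ℝ) × (Fin k → ℝ) × (Fin k → ℝ)) :=
  { v | ∃ (X Y : Matrix (Fin k) (Fin k) ℂ) (hX : X.IsHermitian) (hY : Y.IsHermitian),
      v.1 = eigVec X hX ∧ v.2.1 = eigVec Y hY ∧ v.2.2 = eigVec (X + Y) (hX.add hY) }

/-- The Littlewood–Richardson cone `LR(m,n)`. -/
def LRcone (m n : ℕ) : Set ((Fin (m + n) → ℝ) × (Fin m → ℝ) × (Fin n → ℝ)) :=
  { v | ∃ (M : Matrix (Fin (m + n)) (Fin (m + n)) ℂ) (hM : M.IsHermitian),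
      v.1 = eigVec M hM ∧
      v.2.1 = eigVec (M.submatrix (Fin.castAdd n) (Fin.castAdd n))
        (hM.submatrix (Fin.castAdd n)) ∧
      v.2.2 = eigVec (M.submatrix (Fin.natAdd m) (Fin.natAdd m))
        (hM.submatrix (Fin.natAdd m)) }

/-- Top-left `p × p` block. -/
def blockTL (p q : ℕ) (X : Matrix (Fin (p + q)) (Fin (p + q)) ℂ) : Matrix (Fin p) (Fin p) ℂ :=
  X.submatrix (Fin.castAdd q) (Fin.castAdd q)

/-- Top-right `p × q` block. -/
def blockTR (p q : ℕ) (X : Matrix (Fin (p + q)) (Fin (p + q)) ℂ) : Matrix (Fin p) (Fin q) ℂ :=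
  X.submatrix (Fin.castAdd q) (Fin.natAdd p)

/-- Bottom-left `q × p` block. -/
def blockBL (p q : ℕ) (X : Matrix (Fin (p + q)) (Fin (p + q)) ℂ) : Matrix (Fin q) (Fin p) ℂ :=
  X.submatrix (Fin.natAdd p) (Fin.castAdd q)

/-- Bottom-right `q × q` block. -/
def blockBR (p q : ℕ) (X : Matrix (Fin (p + q)) (Fin (p + q)) ℂ) : Matrix (Fin q) (Fin q) ℂ :=
  X.submatrix (Fin.natAdd p) (Fin.natAdd p)

/-- `λ* = (−λ_k, …, −λ_1)`. -/
def starVec {k : ℕ} (x : Fin k → ℝ) : Fin k → ℝ := fun i => -x i.rev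

/-- `ŝ^{p,q} = (s₁, …, s_q, 0, …, 0, −s_q, …, −s₁) ∈ ℝ^{p+q}` (with `p − q` middle zeros). -/
noncomputable def hatPQ (p q : ℕ) (s : Fin q → ℝ) : Fin (p + q) → ℝ :=
  fun i =>
    if h : (i : ℕ) < q then s ⟨i, h⟩
    else if h' : (i : ℕ) < p then 0
    else -s ⟨p + q - 1 - i, by have := i.isLt; omega⟩

/-- The cone `A(p,q)`: pairs `(e(X), s(X₁₂))` for `X` Hermitian of size `p+q`. -/
def coneA (p q : ℕ) : Set ((Fin (p + q) → ℝ) × (Fin q → ℝ)) :=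
  { v | ∃ (X : Matrix (Fin (p + q)) (Fin (p + q)) ℂ) (hX : X.IsHermitian),
      v.1 = eigVec X hX ∧ ∀ i : Fin q, v.2 i = sval (blockTR p q X) (i : ℕ) }

/-- The cone `S(p,q)`: triples `(s(X), s(X₁₂), s(X₂₁))`. -/
def coneS (p q : ℕ) : Set ((Fin (p + q) → ℝ) × (Fin q → ℝ) × (Fin q → ℝ)) :=
  { v | ∃ X : Matrix (Fin (p + q)) (Fin (p + q)) ℂ,
      (∀ i : Fin (p + q), v.1 i = sval X (i : ℕ)) ∧
      (∀ i : Fin q, v.2.1 i = sval (blockTR p q X) (i : ℕ)) ∧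
      (∀ i : Fin q, v.2.2 i = sval (blockBL p q X) (i : ℕ)) }

/-- The cone `T(p,q)`: triples `(s(X), s(X₁₁), s(X₂₂))`. -/
def coneT (p q : ℕ) : Set ((Fin (p + q) → ℝ) × (Fin p → ℝ) × (Fin q → ℝ)) :=
  { v | ∃ X : Matrix (Fin (p + q)) (Fin (p + q)) ℂ,
      (∀ i : Fin (p + q), v.1 i = sval X (i : ℕ)) ∧
      (∀ i : Fin p, v.2.1 i = sval (blockTL p q X) (i : ℕ)) ∧
      (∀ i : Fin q, v.2.2 i = sval (blockBR p q X) (i : ℕ)) }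

/-- `μ(A) = (a_r − r ≥ … ≥ a₂ − 2 ≥ a₁ − 1)` as a decreasing real vector, for
`A = {a₁ < … < a_r}` a subset of `[n]` (0-based indexing internally). -/
noncomputable def muVec {n r : ℕ} (A : Finset (Fin n)) (h : A.card = r) : Fin r → ℝ :=
  fun k => (((A.orderIsoOfFin h k.rev : Fin n) : ℕ) : ℝ) - ((k.rev : ℕ) : ℝ)

/-- `A^o = {ℓ + 1 − a : a ∈ A}` inside `[ℓ]`. -/
def opp {n : ℕ} (A : Finset (Fin n)) : Finset (Fin n) := A.image Fin.rev

/-- `|s|_{K ∩ [q]}` where `K ⊆ [n]`, `s ∈ ℝ^q` and `[q]` is viewed inside `[n]`. -/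
noncomputable def sumRestr {n q : ℕ} (s : Fin q → ℝ) (K : Finset (Fin n)) : ℝ :=
  ∑ i ∈ K, (if h : (i : ℕ) < q then s ⟨i, h⟩ else 0)

/-- The augmented matrix `Ŷ^{p,q} = [[0, Y], [Yᴴ, 0]]` of size `p + q`. -/
def hatM (p q : ℕ) (Y : Matrix (Fin p) (Fin q) ℂ) : Matrix (Fin (p + q)) (Fin (p + q)) ℂ :=
  Matrix.reindex finSumFinEquiv finSumFinEquiv (Matrix.fromBlocks 0 Y Yᴴ 0)

namespace HornAux

open Polynomial

variable {n : Type*} [Fintype n] [DecidableEq n]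

theorem charmatrix_eq (M : Matrix n n ℂ) :
    charmatrix M = diagonal (fun _ => (X : ℂ[X])) - M.map C := by
  ext i j
  rw [charmatrix_apply]
  simp [Matrix.sub_apply, Matrix.map_apply]

theorem charpoly_conj (P Q A : Matrix n n ℂ) (hPQ : P * Q = 1) (hQP : Q * P = 1) :
    (P * A * Q).charpoly = A.charpoly := by
  have hD : ∀ M : Matrix n n ℂ[X], M * diagonal (fun _ => (X : ℂ[X])) =
      diagonal (fun _ => (X : ℂ[X])) * M := by
    intro M
    rw [← Matrix.smul_one_eq_diagonal, Matrix.mul_smul, Matrix.smul_mul, mul_one, one_mul]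
  have key : charmatrix (P * A * Q) = P.map C * charmatrix A * Q.map C := by
    rw [charmatrix_eq, charmatrix_eq, Matrix.mul_sub, Matrix.sub_mul]
    congr 1
    · rw [hD, Matrix.mul_assoc, ← Matrix.map_mul, hPQ]
      simp
    · rw [← Matrix.map_mul, ← Matrix.map_mul]
  have hdet : (P.map (C : ℂ →+* ℂ[X])).det * (Q.map (C : ℂ →+* ℂ[X])).det = 1 := by
    rw [← det_mul, ← Matrix.map_mul, hPQ]
    simp
  rw [Matrix.charpoly, Matrix.charpoly, key, det_mul, det_mul]
  ring_nf
  rw [mul_comm, ← mul_assoc, mul_comm ((Q.map C).det), hdet, one_mul]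

theorem charpoly_diagonal (d : n → ℂ) :
    (diagonal d).charpoly = ∏ i, (X - C (d i)) := by
  have : charmatrix (diagonal d) = diagonal (fun i => X - C (d i)) := by
    apply Matrix.ext
    intro i j
    rcases eq_or_ne i j with rfl | h
    · rw [charmatrix_apply_eq]
      simp
    · rw [charmatrix_apply_ne _ _ _ h, diagonal_apply_ne _ h, diagonal_apply_ne _ h]
      simp
  rw [Matrix.charpoly, this, det_diagonal]

theorem charpoly_of_conj_diag {A : Matrix n n ℂ} (U V : Matrix n n ℂ) (d : n → ℝ)
    (hUV : U * V = 1) (hVU : V * U = 1)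
    (hA : A = U * diagonal (fun i => ((d i : ℝ) : ℂ)) * V) :
    A.charpoly = ∏ i, (X - C ((d i : ℝ) : ℂ)) := by
  rw [hA, charpoly_conj _ _ _ hUV hVU, charpoly_diagonal]

theorem roots_prod_X_sub_C' {ι : Type*} [Fintype ι] (f : ι → ℂ) :
    (∏ i, (X - C (f i))).roots = Multiset.map f Finset.univ.val := by
  rw [Finset.prod_eq_multiset_prod]
  have h : (fun i => (X : ℂ[X]) - C (f i)) = (fun a => X - C a) ∘ f := rfl
  rw [h, ← Multiset.map_map]
  exact roots_multiset_prod_X_sub_C _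

theorem roots_charpoly_of_conj_diag {A : Matrix n n ℂ} (U V : Matrix n n ℂ) (d : n → ℝ)
    (hUV : U * V = 1) (hVU : V * U = 1)
    (hA : A = U * diagonal (fun i => ((d i : ℝ) : ℂ)) * V) :
    A.charpoly.roots = Multiset.map (fun i => ((d i : ℝ) : ℂ)) Finset.univ.val := by
  rw [charpoly_of_conj_diag U V d hUV hVU hA, roots_prod_X_sub_C']

/-- smul-and-conjugate version of the spectral theorem, giving the charpoly roots. -/
theorem roots_charpoly_smul_conj {A : Matrix n n ℂ} (hA : A.IsHermitian) (c : ℝ)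
    (P Q : Matrix n n ℂ) (hPQ : P * Q = 1) (hQP : Q * P = 1) :
    (P * ((c : ℂ) • A) * Q).charpoly.roots =
      Multiset.map (fun i => ((c * hA.eigenvalues i : ℝ) : ℂ)) Finset.univ.val := by
  have hU1 : (hA.eigenvectorUnitary : Matrix n n ℂ) * star (hA.eigenvectorUnitary : Matrix n n ℂ)
      = 1 := Unitary.mul_star_self_of_mem hA.eigenvectorUnitary.2
  have hU2 : star (hA.eigenvectorUnitary : Matrix n n ℂ) * (hA.eigenvectorUnitary : Matrix n n ℂ)
      = 1 := Unitary.star_mul_self_of_mem hA.eigenvectorUnitary.2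
  apply roots_charpoly_of_conj_diag (P * (hA.eigenvectorUnitary : Matrix n n ℂ))
    (star (hA.eigenvectorUnitary : Matrix n n ℂ) * Q)
  · calc P * ↑hA.eigenvectorUnitary * (star ↑hA.eigenvectorUnitary * Q)
        = P * ((hA.eigenvectorUnitary : Matrix n n ℂ) * star ↑hA.eigenvectorUnitary) * Q := by
          noncomm_ring
      _ = 1 := by rw [hU1, mul_one, hPQ]
  · calc star (hA.eigenvectorUnitary : Matrix n n ℂ) * Q * (P * ↑hA.eigenvectorUnitary)
        = star (hA.eigenvectorUnitary : Matrix n n ℂ) * (Q * P) * ↑hA.eigenvectorUnitary := by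
          noncomm_ring
      _ = 1 := by rw [hQP, mul_one, hU2]
  · have hd : (c : ℂ) • diagonal (RCLike.ofReal ∘ hA.eigenvalues) =
        diagonal (fun i => ((c * hA.eigenvalues i : ℝ) : ℂ)) := by
      ext i j
      rcases eq_or_ne i j with rfl | h
      · simp [Function.comp]
      · simp [diagonal_apply_ne _ h]
    conv_lhs => rw [hA.spectral_theorem, Unitary.conjStarAlgAut_apply]
    rw [← hd]
    rw [Matrix.mul_smul, Matrix.smul_mul, Matrix.mul_smul, Matrix.smul_mul]
    noncomm_ring


theorem monotone_unique {k : ℕ} {f g : Fin k → ℝ} (hf : Monotone f) (hg : Monotone g)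
    (h : Multiset.map f Finset.univ.val = Multiset.map g Finset.univ.val) : f = g := by
  have key : ∀ u : Fin k → ℝ, (↑(List.ofFn u) : Multiset ℝ) = Multiset.map u Finset.univ.val := by
    intro u
    rw [List.ofFn_eq_map, Fin.univ_def]
    rfl
  apply List.ofFn_injective
  have hperm : (List.ofFn f).Perm (List.ofFn g) := by
    rw [← Multiset.coe_eq_coe, key f, key g]
    exact h
  exact List.Perm.eq_of_sortedLE (List.sortedLE_ofFn_iff.mpr hf)
    (List.sortedLE_ofFn_iff.mpr hg) hperm

theorem antitone_unique {k : ℕ} {f g : Fin k → ℝ} (hf : Antitone f) (hg : Antitone g)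
    (h : Multiset.map f Finset.univ.val = Multiset.map g Finset.univ.val) : f = g := by
  have hrev : ∀ u : Fin k → ℝ, Multiset.map (fun a : Fin k => u a.rev) Finset.univ.val
      = Multiset.map u Finset.univ.val := by
    intro u
    have hc : (fun a : Fin k => u a.rev) = u ∘ Fin.rev := rfl
    rw [hc, ← Multiset.map_map]
    congr 1
    conv_rhs => rw [← Finset.map_univ_equiv (Fin.revPerm (n := k))]
    rfl
  have h2 : f ∘ Fin.rev = g ∘ Fin.rev := by
    apply monotone_unique (fun a b hab => hf (Fin.rev_le_rev.mpr hab))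
      (fun a b hab => hg (Fin.rev_le_rev.mpr hab))
    rw [hrev, hrev]; exact h
  funext i
  have := congrFun h2 i.rev
  simpa [Fin.rev_rev] using this

theorem eigVec_antitone {k : ℕ} (A : Matrix (Fin k) (Fin k) ℂ) (hA : A.IsHermitian) :
    Antitone (eigVec A hA) := by
  have h1 : Monotone (hA.eigenvalues ∘ Tuple.sort hA.eigenvalues) := Tuple.monotone_sort _
  intro a b hab
  exact h1 (Fin.rev_le_rev.mpr hab)

theorem eigVec_multiset {k : ℕ} (A : Matrix (Fin k) (Fin k) ℂ) (hA : A.IsHermitian) :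
    Multiset.map (eigVec A hA) Finset.univ.val
      = Multiset.map hA.eigenvalues Finset.univ.val := by
  have h0 : eigVec A hA
      = hA.eigenvalues ∘ ⇑(Fin.revPerm.trans (Tuple.sort hA.eigenvalues)) := rfl
  rw [h0, ← Multiset.map_map]
  congr 1
  conv_rhs => rw [← Finset.map_univ_equiv (Fin.revPerm.trans (Tuple.sort hA.eigenvalues))]
  rfl

theorem roots_charpoly_hermitian {k : ℕ} {A : Matrix (Fin k) (Fin k) ℂ} (hA : A.IsHermitian) :
    A.charpoly.roots
      = Multiset.map (fun i => ((hA.eigenvalues i : ℝ) : ℂ)) Finset.univ.val := by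
  have := roots_charpoly_smul_conj hA 1 1 1 (one_mul 1) (one_mul 1)
  simpa using this

theorem eigVec_eq_of_roots {k : ℕ} {A : Matrix (Fin k) (Fin k) ℂ} (hA : A.IsHermitian)
    {d : Fin k → ℝ} (hd : Antitone d)
    (h : A.charpoly.roots = Multiset.map (fun i => ((d i : ℝ) : ℂ)) Finset.univ.val) :
    eigVec A hA = d := by
  have hm : Multiset.map hA.eigenvalues Finset.univ.val
      = Multiset.map d Finset.univ.val := by
    apply Multiset.map_injective (f := (Complex.ofReal : ℝ → ℂ)) Complex.ofReal_injective
    have h2 := (roots_charpoly_hermitian hA).symm.trans h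
    rw [show (fun i => ((hA.eigenvalues i : ℝ) : ℂ))
        = (Complex.ofReal : ℝ → ℂ) ∘ hA.eigenvalues from rfl,
      show (fun i => ((d i : ℝ) : ℂ)) = (Complex.ofReal : ℝ → ℂ) ∘ d from rfl,
      ← Multiset.map_map, ← Multiset.map_map] at h2
    exact h2
  exact antitone_unique (eigVec_antitone A hA) hd ((eigVec_multiset A hA).trans hm)


section PQ

variable (p q : ℕ)

theorem reindex_mul {α β : Type*} [Fintype α] [Fintype β] [DecidableEq α] [DecidableEq β]
    (e : α ≃ β) (M N : Matrix α α ℂ) :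
    reindex e e M * reindex e e N = reindex e e (M * N) := by
  simp [Matrix.reindex_apply, Matrix.submatrix_mul_equiv]

theorem hatM_isHermitian (Y : Matrix (Fin p) (Fin q) ℂ) : (hatM p q Y).IsHermitian := by
  unfold hatM
  unfold Matrix.IsHermitian
  rw [Matrix.reindex_apply, Matrix.conjTranspose_submatrix, Matrix.fromBlocks_conjTranspose]
  simp

theorem Ipq_herm (Ipq : Matrix (Fin (p + q)) (Fin (p + q)) ℂ)
    (hIpq : Ipq = Matrix.reindex finSumFinEquiv finSumFinEquiv
      (Matrix.fromBlocks (1 : Matrix (Fin p) (Fin p) ℂ) 0 0 (-1 : Matrix (Fin q) (Fin q) ℂ))) :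
    Ipqᴴ = Ipq := by
  rw [hIpq, Matrix.reindex_apply, Matrix.conjTranspose_submatrix,
    Matrix.fromBlocks_conjTranspose]
  simp

theorem Ipq_sq (Ipq : Matrix (Fin (p + q)) (Fin (p + q)) ℂ)
    (hIpq : Ipq = Matrix.reindex finSumFinEquiv finSumFinEquiv
      (Matrix.fromBlocks (1 : Matrix (Fin p) (Fin p) ℂ) 0 0 (-1 : Matrix (Fin q) (Fin q) ℂ))) :
    Ipq * Ipq = 1 := by
  rw [hIpq, reindex_mul, Matrix.fromBlocks_multiply]
  simp [Matrix.fromBlocks_one]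

theorem X_decomp (X : Matrix (Fin (p + q)) (Fin (p + q)) ℂ) :
    X = Matrix.reindex finSumFinEquiv finSumFinEquiv
      (X.submatrix finSumFinEquiv finSumFinEquiv) := by
  simp [Matrix.reindex_apply, Matrix.submatrix_submatrix]

theorem key_block (X : Matrix (Fin (p + q)) (Fin (p + q)) ℂ) (hX : X.IsHermitian)
    (Ipq : Matrix (Fin (p + q)) (Fin (p + q)) ℂ)
    (hIpq : Ipq = Matrix.reindex finSumFinEquiv finSumFinEquiv
      (Matrix.fromBlocks (1 : Matrix (Fin p) (Fin p) ℂ) 0 0 (-1 : Matrix (Fin q) (Fin q) ℂ))) :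
    X - Ipq * X * Ipq = (2 : ℂ) • hatM p q (blockTR p q X) := by
  set e := (finSumFinEquiv : Fin p ⊕ Fin q ≃ Fin (p + q)) with he
  set M := X.submatrix ⇑e ⇑e with hM
  have hB : M.toBlocks₁₂ = blockTR p q X := by
    unfold blockTR
    ext i j
    simp [Matrix.toBlocks₁₂, hM, he]
  have hC : M.toBlocks₂₁ = (blockTR p q X)ᴴ := by
    unfold blockTR
    ext i j
    simp only [Matrix.toBlocks₂₁, Matrix.conjTranspose_apply, Matrix.submatrix_apply,
      Matrix.of_apply, hM, he]
    have := congrFun (congrFun hX (Fin.natAdd p i)) (Fin.castAdd q j)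
    rw [Matrix.conjTranspose_apply] at this
    simpa using this.symm
  have hX' : X = reindex e e M := X_decomp p q X
  have h2 : Ipq * X * Ipq = reindex e e
      ((Matrix.fromBlocks 1 0 0 (-1)) * M * (Matrix.fromBlocks 1 0 0 (-1))) := by
    rw [hIpq]
    conv_lhs => rw [hX']
    rw [reindex_mul, reindex_mul]
  rw [h2]
  conv_lhs => rw [hX']
  have hMb : M = Matrix.fromBlocks M.toBlocks₁₁ M.toBlocks₁₂ M.toBlocks₂₁ M.toBlocks₂₂ :=
    (Matrix.fromBlocks_toBlocks M).symm
  have hcomp : M - (Matrix.fromBlocks 1 0 0 (-1)) * M * (Matrix.fromBlocks 1 0 0 (-1))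
      = (2 : ℂ) • Matrix.fromBlocks 0 (blockTR p q X) (blockTR p q X)ᴴ 0 := by
    conv_lhs => rw [hMb]
    rw [Matrix.fromBlocks_multiply, Matrix.fromBlocks_multiply, Matrix.fromBlocks_smul,
      ← hC, ← hB, sub_eq_add_neg, Matrix.fromBlocks_neg, Matrix.fromBlocks_add]
    congr 1 <;> first
      | (ext i j; simp [two_smul]; ring)
      | (ext i j; simp [two_smul])
  have : (2 : ℂ) • hatM p q (blockTR p q X)
      = reindex e e ((2 : ℂ) • Matrix.fromBlocks 0 (blockTR p q X) (blockTR p q X)ᴴ 0) := by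
    unfold hatM
    rw [he]
    simp [Matrix.reindex_apply, Matrix.submatrix_smul]
  rw [this, ← hcomp]
  simp [Matrix.reindex_apply, Matrix.submatrix_sub]

end PQ

section HatSpec

/-- `(charpoly M).comp r` as a determinant. -/
theorem charpoly_comp_det {n : Type*} [Fintype n] [DecidableEq n] (M : Matrix n n ℂ)
    (r : ℂ[X]) :
    (M.charpoly).comp r = Matrix.det (r • (1 : Matrix n n ℂ[X]) - M.map C) := by
  have hcomp : (M.charpoly).comp r = eval₂RingHom (C : ℂ →+* ℂ[X]) r M.charpoly := rfl
  rw [hcomp, Matrix.charpoly, RingHom.map_det, RingHom.mapMatrix_apply]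
  congr 1
  apply Matrix.ext
  intro i j
  rcases eq_or_ne i j with rfl | h
  · rw [Matrix.map_apply, charmatrix_apply_eq]
    simp [Matrix.smul_apply, Matrix.one_apply]
  · rw [Matrix.map_apply, charmatrix_apply_ne _ _ _ h]
    simp [Matrix.smul_apply, Matrix.one_apply_ne h, Matrix.one_apply_ne, h]

/-- generic `map` of `r • 1 - N.map C` along a ring hom. -/
theorem map_smul_one_sub {n : Type*} [Fintype n] [DecidableEq n] {F : Type*} [Field F]
    (φ : ℂ[X] →+* F) (N : Matrix n n ℂ) (r : ℂ[X]) :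
    (r • (1 : Matrix n n ℂ[X]) - N.map C).map φ
      = (φ r) • (1 : Matrix n n F) - N.map (φ.comp C) := by
  apply Matrix.ext
  intro i j
  rcases eq_or_ne i j with rfl | h
  · simp [Matrix.map_apply, Matrix.sub_apply, Matrix.smul_apply, Matrix.one_apply]
  · simp [Matrix.map_apply, Matrix.sub_apply, Matrix.smul_apply, Matrix.one_apply_ne h]

theorem smul_one_sub_eq {a b : Type*} [Fintype a] [Fintype b] [DecidableEq a]
    {F : Type*} [Field F] (x : F) (hx : x ≠ 0) (P : Matrix a b F) (Q : Matrix b a F) :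
    x ^ 2 • ((1 : Matrix a a F) + (-(x⁻¹ • P)) * (x⁻¹ • Q))
      = x ^ 2 • (1 : Matrix a a F) - P * Q := by
  have h2 : (-(x⁻¹ • P)) * (x⁻¹ • Q) = -((x⁻¹ * x⁻¹) • (P * Q)) := by
    rw [Matrix.neg_mul, Matrix.smul_mul, Matrix.mul_smul, smul_smul]
  have hc : x ^ 2 * (x⁻¹ * x⁻¹) = 1 := by rw [pow_two]; field_simp
  rw [h2, smul_add, smul_neg, smul_smul, hc, one_smul, ← sub_eq_add_neg]

theorem det_smul_one_sub {a b : Type*} [Fintype a] [Fintype b] [DecidableEq a] [DecidableEq b]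
    {F : Type*} [Field F] (x : F) (hx : x ≠ 0) (P : Matrix a b F) (Q : Matrix b a F) :
    Matrix.det (x ^ 2 • (1 : Matrix a a F) - P * Q)
      = x ^ (2 * Fintype.card a) * Matrix.det (1 + (-(x⁻¹ • P)) * (x⁻¹ • Q)) := by
  rw [← smul_one_sub_eq x hx P Q, Matrix.det_smul, ← pow_mul, mul_comm 2 (Fintype.card a),
    mul_comm (Fintype.card a) 2]

theorem det_sq_smul_sub {m k : Type*} [Fintype m] [Fintype k] [DecidableEq m] [DecidableEq k]
    {F : Type*} [Field F] (x : F) (hx : x ≠ 0) (A : Matrix m k F) (B : Matrix k m F) :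
    x ^ (2 * Fintype.card k) * Matrix.det (x ^ 2 • (1 : Matrix m m F) - A * B)
      = x ^ (2 * Fintype.card m) * Matrix.det (x ^ 2 • (1 : Matrix k k F) - B * A) := by
  rw [det_smul_one_sub x hx A B, det_smul_one_sub x hx B A]
  have hdet : Matrix.det ((1 : Matrix m m F) + (-(x⁻¹ • A)) * (x⁻¹ • B))
      = Matrix.det ((1 : Matrix k k F) + (-(x⁻¹ • B)) * (x⁻¹ • A)) := by
    rw [Matrix.det_one_add_mul_comm]
    congr 1
    rw [Matrix.mul_neg, Matrix.neg_mul]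
  rw [hdet]
  ring

theorem charpoly_hermitian {n : Type*} [Fintype n] [DecidableEq n] {A : Matrix n n ℂ}
    (hA : A.IsHermitian) :
    A.charpoly = ∏ i, (X - C ((hA.eigenvalues i : ℝ) : ℂ)) := by
  have hU1 : (hA.eigenvectorUnitary : Matrix n n ℂ) * star (hA.eigenvectorUnitary : Matrix n n ℂ)
      = 1 := Unitary.mul_star_self_of_mem hA.eigenvectorUnitary.2
  have hU2 : star (hA.eigenvectorUnitary : Matrix n n ℂ) * (hA.eigenvectorUnitary : Matrix n n ℂ)
      = 1 := Unitary.star_mul_self_of_mem hA.eigenvectorUnitary.2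
  apply charpoly_of_conj_diag _ _ _ hU1 hU2
  conv_lhs => rw [hA.spectral_theorem, Unitary.conjStarAlgAut_apply]
  congr

theorem charpoly_sq (p q : ℕ) (Y : Matrix (Fin p) (Fin q) ℂ) :
    (Matrix.fromBlocks 0 Y Yᴴ 0).charpoly ^ 2
      = Matrix.det ((X : ℂ[X]) ^ 2 • 1 - (Y * Yᴴ).map C)
        * Matrix.det ((X : ℂ[X]) ^ 2 • 1 - (Yᴴ * Y).map C) := by
  set Z₀ : Matrix (Fin p ⊕ Fin q) (Fin p ⊕ Fin q) ℂ := Matrix.fromBlocks 0 Y Yᴴ 0 with hZ₀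
  have hcm : charmatrix Z₀ = Matrix.fromBlocks ((X : ℂ[X]) • 1) (-(Y.map C)) (-((Yᴴ).map C))
      ((X : ℂ[X]) • 1) := by
    rw [charmatrix_eq, hZ₀]
    have hd : (diagonal (fun _ : Fin p ⊕ Fin q => (X : ℂ[X])))
        = Matrix.fromBlocks ((X : ℂ[X]) • 1) 0 0 ((X : ℂ[X]) • 1) := by
      rw [Matrix.smul_one_eq_diagonal, Matrix.smul_one_eq_diagonal, Matrix.fromBlocks_diagonal]
      congr 1
      funext i
      cases i <;> rfl
    rw [hd, Matrix.fromBlocks_map, sub_eq_add_neg, Matrix.fromBlocks_neg, Matrix.fromBlocks_add]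
    simp
  set M₂ : Matrix (Fin p ⊕ Fin q) (Fin p ⊕ Fin q) ℂ[X] :=
    Matrix.fromBlocks ((X : ℂ[X]) • 1) (Y.map C) ((Yᴴ).map C) ((X : ℂ[X]) • 1) with hM₂
  have hdet2 : M₂.det = (charmatrix Z₀).det := by
    have hconj : Matrix.fromBlocks (1 : Matrix (Fin p) (Fin p) ℂ[X]) 0 0
        (-1 : Matrix (Fin q) (Fin q) ℂ[X]) * charmatrix Z₀ *
        Matrix.fromBlocks 1 0 0 (-1) = M₂ := by
      rw [hcm, Matrix.fromBlocks_multiply, Matrix.fromBlocks_multiply, hM₂]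
      congr 1 <;> simp
    rw [← hconj, Matrix.det_mul, Matrix.det_mul]
    have hJ : (Matrix.fromBlocks (1 : Matrix (Fin p) (Fin p) ℂ[X]) 0 0
        (-1 : Matrix (Fin q) (Fin q) ℂ[X])).det *
        (Matrix.fromBlocks (1 : Matrix (Fin p) (Fin p) ℂ[X]) 0 0
        (-1 : Matrix (Fin q) (Fin q) ℂ[X])).det = 1 := by
      rw [← Matrix.det_mul, Matrix.fromBlocks_multiply]
      simp [Matrix.fromBlocks_one]
    calc (Matrix.fromBlocks 1 0 0 (-1) : Matrix (Fin p ⊕ Fin q) (Fin p ⊕ Fin q) ℂ[X]).det *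
          (charmatrix Z₀).det * (Matrix.fromBlocks 1 0 0 (-1) :
            Matrix (Fin p ⊕ Fin q) (Fin p ⊕ Fin q) ℂ[X]).det
        = ((Matrix.fromBlocks 1 0 0 (-1) : Matrix (Fin p ⊕ Fin q) (Fin p ⊕ Fin q) ℂ[X]).det *
          (Matrix.fromBlocks 1 0 0 (-1) :
            Matrix (Fin p ⊕ Fin q) (Fin p ⊕ Fin q) ℂ[X]).det) * (charmatrix Z₀).det := by ring
      _ = (charmatrix Z₀).det := by rw [hJ, one_mul]
  have hprod : charmatrix Z₀ * M₂ = Matrix.fromBlocks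
      ((X : ℂ[X]) ^ 2 • 1 - (Y * Yᴴ).map C) 0 0 ((X : ℂ[X]) ^ 2 • 1 - (Yᴴ * Y).map C) := by
    have hTL : ((X : ℂ[X]) • 1) * ((X : ℂ[X]) • 1) + (-(Y.map C)) * ((Yᴴ).map C)
        = (X : ℂ[X]) ^ 2 • 1 - (Y * Yᴴ).map C := by
      rw [Matrix.smul_mul, Matrix.one_mul, smul_smul, ← pow_two,
        Matrix.neg_mul, ← Matrix.map_mul, ← sub_eq_add_neg]
    have hTR : ((X : ℂ[X]) • (1 : Matrix (Fin p) (Fin p) ℂ[X])) * (Y.map C)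
        + (-(Y.map C)) * ((X : ℂ[X]) • (1 : Matrix (Fin q) (Fin q) ℂ[X]))
        = (0 : Matrix (Fin p) (Fin q) ℂ[X]) := by
      rw [Matrix.smul_mul, Matrix.one_mul, Matrix.neg_mul, Matrix.mul_smul, Matrix.mul_one]
      exact add_neg_cancel _
    have hBL : (-((Yᴴ).map C)) * ((X : ℂ[X]) • (1 : Matrix (Fin p) (Fin p) ℂ[X]))
        + ((X : ℂ[X]) • (1 : Matrix (Fin q) (Fin q) ℂ[X])) * ((Yᴴ).map C)
        = (0 : Matrix (Fin q) (Fin p) ℂ[X]) := by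
      rw [Matrix.neg_mul, Matrix.mul_smul, Matrix.mul_one, Matrix.smul_mul, Matrix.one_mul]
      exact neg_add_cancel _
    have hBR : (-((Yᴴ).map C)) * (Y.map C) + ((X : ℂ[X]) • 1) * ((X : ℂ[X]) • 1)
        = (X : ℂ[X]) ^ 2 • 1 - (Yᴴ * Y).map C := by
      rw [Matrix.neg_mul, ← Matrix.map_mul, Matrix.smul_mul, Matrix.one_mul, smul_smul, ← pow_two,
        neg_add_eq_sub]
    rw [hcm, hM₂, Matrix.fromBlocks_multiply, hTL, hTR, hBL, hBR]
  have : Z₀.charpoly ^ 2 = (charmatrix Z₀).det * M₂.det := by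
    rw [Matrix.charpoly, hdet2, pow_two]
  rw [this, ← Matrix.det_mul, hprod, Matrix.det_fromBlocks_zero₂₁]

theorem monic_sq_inj {f g : ℂ[X]} (hf : f.Monic) (hg : g.Monic) (h : f ^ 2 = g ^ 2) :
    f = g := by
  have h0 : (f - g) * (f + g) = 0 := by
    rw [show (f - g) * (f + g) = f ^ 2 - g ^ 2 from by ring, h, sub_self]
  rcases mul_eq_zero.mp h0 with h1 | h1
  · exact sub_eq_zero.mp h1
  · exfalso
    have hg' : g = -f := (neg_eq_of_add_eq_zero_right h1).symm
    rw [hg'] at hg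
    have hlc : (-f).leadingCoeff = -1 := by rw [Polynomial.leadingCoeff_neg, hf.leadingCoeff]
    rw [hg.leadingCoeff] at hlc
    norm_num at hlc

set_option maxHeartbeats 1000000 in
set_option synthInstance.maxHeartbeats 400000 in
theorem cross_identity (p q : ℕ) (Y : Matrix (Fin p) (Fin q) ℂ) :
    (X : ℂ[X]) ^ (2 * p) * Matrix.det ((X : ℂ[X]) ^ 2 • 1 - (Yᴴ * Y).map C)
      = (X : ℂ[X]) ^ (2 * q) * Matrix.det ((X : ℂ[X]) ^ 2 • 1 - (Y * Yᴴ).map C) := by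
  set F := FractionRing ℂ[X]
  set φ : ℂ[X] →+* F := (algebraMap ℂ[X] F : ℂ[X] →+* F) with hφ
  have hinj : Function.Injective φ := IsFractionRing.injective ℂ[X] F
  apply hinj
  have hx : φ X ≠ 0 := by
    intro h
    exact Polynomial.X_ne_zero (hinj (by rw [h, map_zero]))
  rw [_root_.map_mul φ, _root_.map_mul φ, map_pow, RingHom.map_det, RingHom.map_det,
    RingHom.mapMatrix_apply, RingHom.mapMatrix_apply, map_smul_one_sub, map_smul_one_sub,
    map_pow, Matrix.map_mul, Matrix.map_mul]
  have := det_sq_smul_sub (φ X) hx (Y.map (φ.comp C)) ((Yᴴ).map (φ.comp C))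
  simpa using this.symm

end HatSpec

theorem multiset_map_perm {k : ℕ} {γ : Type*} (g : Fin k → γ) (π : Equiv.Perm (Fin k)) :
    Multiset.map (fun i => g (π i)) Finset.univ.val = Multiset.map g Finset.univ.val := by
  have hc : (fun i => g (π i)) = g ∘ ⇑π := rfl
  rw [hc, ← Multiset.map_map]
  congr 1
  conv_rhs => rw [← Finset.map_univ_equiv π]
  rfl

theorem eigVec_apply_eigenvalues {k : ℕ} (A : Matrix (Fin k) (Fin k) ℂ) (hA : A.IsHermitian) :
    eigVec A hA = fun i => hA.eigenvalues ((Fin.revPerm.trans (Tuple.sort hA.eigenvalues)) i) :=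
  rfl

theorem eigVec_nonneg {a b : ℕ} (Y : Matrix (Fin a) (Fin b) ℂ) (j : Fin a) :
    0 ≤ eigVec (Y * Yᴴ) (Matrix.isHermitian_mul_conjTranspose_self Y) j :=
  Matrix.eigenvalues_self_mul_conjTranspose_nonneg Y _

theorem eigVec_mul_conjTranspose_zero {p q : ℕ} (hpq : q ≤ p) (Y : Matrix (Fin p) (Fin q) ℂ)
    (j : Fin p) (hj : q ≤ (j : ℕ)) :
    eigVec (Y * Yᴴ) (Matrix.isHermitian_mul_conjTranspose_self Y) j = 0 := by
  set h1 := Matrix.isHermitian_mul_conjTranspose_self Y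
  set lam := eigVec (Y * Yᴴ) h1 with hlam
  by_contra hne
  have hpos : 0 < lam j := lt_of_le_of_ne (eigVec_nonneg Y j) (Ne.symm hne)
  -- the number of nonzero eigenvalues is the rank, which is at most q
  have hrank : (Y * Yᴴ).rank ≤ q := by
    calc (Y * Yᴴ).rank ≤ (Yᴴ).rank := Matrix.rank_mul_le_right Y Yᴴ
      _ ≤ q := Matrix.rank_le_height Yᴴ
  have hcard0 : (Finset.univ.filter (fun i : Fin p => h1.eigenvalues i ≠ 0)).card ≤ q := by
    have := h1.rank_eq_card_non_zero_eigs
    rw [Fintype.card_subtype] at this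
    omega
  set π : Equiv.Perm (Fin p) := Fin.revPerm.trans (Tuple.sort h1.eigenvalues) with hπ
  have hcard1 : (Finset.univ.filter (fun i : Fin p => lam i ≠ 0)).card
      = (Finset.univ.filter (fun i : Fin p => h1.eigenvalues i ≠ 0)).card := by
    apply Finset.card_bij (fun a _ => π a)
    · intro a ha
      rw [Finset.mem_filter] at ha ⊢
      exact ⟨Finset.mem_univ _, ha.2⟩
    · intro a _ b _ hab
      exact π.injective hab
    · intro b hb
      refine ⟨π.symm b, ?_, by simp⟩
      rw [Finset.mem_filter] at hb ⊢
      refine ⟨Finset.mem_univ _, ?_⟩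
      have : lam (π.symm b) = h1.eigenvalues b := by
        rw [hlam, eigVec_apply_eigenvalues, ← hπ]
        simp
      rw [this]
      exact hb.2
  have hsub : Finset.Iic j ⊆ Finset.univ.filter (fun i : Fin p => lam i ≠ 0) := by
    intro k hk
    rw [Finset.mem_Iic] at hk
    rw [Finset.mem_filter]
    refine ⟨Finset.mem_univ _, ?_⟩
    have : lam j ≤ lam k := eigVec_antitone _ h1 hk
    exact ne_of_gt (lt_of_lt_of_le hpos this)
  have hcard2 : (j : ℕ) + 1 ≤ (Finset.univ.filter (fun i : Fin p => lam i ≠ 0)).card := by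
    have := Finset.card_le_card hsub
    rw [Fin.card_Iic] at this
    omega
  omega

theorem hatPQ_antitone {p q : ℕ} (hpq : q ≤ p) {s : Fin q → ℝ} (hs : Antitone s)
    (h0 : ∀ i, 0 ≤ s i) : Antitone (hatPQ p q s) := by
  intro a b hab
  unfold hatPQ
  have hab' : (a : ℕ) ≤ (b : ℕ) := hab
  by_cases hb1 : (b : ℕ) < q
  · have ha1 : (a : ℕ) < q := lt_of_le_of_lt hab' hb1
    rw [dif_pos hb1, dif_pos ha1]
    exact hs (by simp [Fin.mk_le_mk]; omega)
  · rw [dif_neg hb1]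
    by_cases hb2 : (b : ℕ) < p
    · rw [dif_pos hb2]
      by_cases ha1 : (a : ℕ) < q
      · rw [dif_pos ha1]; exact h0 _
      · have ha2 : (a : ℕ) < p := lt_of_le_of_lt hab' hb2
        rw [dif_neg ha1, dif_pos ha2]
    · rw [dif_neg hb2]
      by_cases ha1 : (a : ℕ) < q
      · rw [dif_pos ha1]
        exact le_trans (neg_nonpos.mpr (h0 _)) (h0 _)
      · rw [dif_neg ha1]
        by_cases ha2 : (a : ℕ) < p
        · rw [dif_pos ha2]
          exact neg_nonpos.mpr (h0 _)
        · rw [dif_neg ha2]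
          apply neg_le_neg
          apply hs
          simp [Fin.mk_le_mk]
          omega

set_option maxHeartbeats 1600000 in
theorem eigVec_hatM (p q : ℕ) (hpq : q ≤ p) (Y : Matrix (Fin p) (Fin q) ℂ)
    (hZ : (hatM p q Y).IsHermitian) :
    eigVec (hatM p q Y) hZ = hatPQ p q (fun i : Fin q => sval Y (i : ℕ)) := by
  classical
  set h1 := Matrix.isHermitian_mul_conjTranspose_self Y with hh1
  set lam := eigVec (Y * Yᴴ) h1 with hlam
  set sig : Fin p → ℝ := fun j => Real.sqrt (lam j) with hsig
  set s : Fin q → ℝ := fun i : Fin q => sval Y (i : ℕ) with hs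
  have hlam_anti : Antitone lam := eigVec_antitone _ h1
  have hlam_nonneg : ∀ j, 0 ≤ lam j := fun j => eigVec_nonneg Y j
  have hsig_anti : Antitone sig := fun a b h => Real.sqrt_le_sqrt (hlam_anti h)
  have hsig_nonneg : ∀ j, 0 ≤ sig j := fun j => Real.sqrt_nonneg _
  have hsig_zero : ∀ j : Fin p, q ≤ (j : ℕ) → sig j = 0 := by
    intro j hj
    rw [hsig]
    dsimp only
    rw [hlam, eigVec_mul_conjTranspose_zero hpq Y j hj, Real.sqrt_zero]
  have hs_eq : ∀ i : Fin q, s i = sig (Fin.castLE hpq i) := by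
    intro i
    rw [hs]
    dsimp only
    unfold sval
    rw [dif_pos (lt_of_lt_of_le i.isLt hpq)]
    rfl
  have hs_anti : Antitone s := by
    intro a b hab
    rw [hs_eq, hs_eq]
    apply hsig_anti
    have hab' : (a : ℕ) ≤ (b : ℕ) := hab
    exact hab'
  have hs_nonneg : ∀ i, 0 ≤ s i := by
    intro i
    rw [hs_eq]
    exact hsig_nonneg _
  set Pm : ℂ[X] := ∏ j : Fin p, (X - C ((sig j : ℝ) : ℂ)) with hPm
  set Pp : ℂ[X] := ∏ j : Fin p, (X + C ((sig j : ℝ) : ℂ)) with hPp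
  have hdetp : Matrix.det ((X : ℂ[X]) ^ 2 • 1 - (Y * Yᴴ).map C) = Pm * Pp := by
    rw [← charpoly_comp_det]
    have hP : (Y * Yᴴ).charpoly = ∏ j : Fin p, (X - C ((lam j : ℝ) : ℂ)) := by
      rw [charpoly_hermitian h1]
      exact (Equiv.prod_comp (Fin.revPerm.trans (Tuple.sort h1.eigenvalues))
        (fun i => (X : ℂ[X]) - C ((h1.eigenvalues i : ℝ) : ℂ))).symm
    rw [hP, Polynomial.prod_comp, hPm, hPp, ← Finset.prod_mul_distrib]
    apply Finset.prod_congr rfl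
    intro j _
    rw [Polynomial.sub_comp, Polynomial.X_comp, Polynomial.C_comp]
    have hsq : ((lam j : ℝ) : ℂ) = ((sig j : ℝ) : ℂ) ^ 2 := by
      rw [hsig]
      dsimp only
      rw [← Complex.ofReal_pow, Real.sq_sqrt (hlam_nonneg j)]
    rw [hsq, map_pow, sq_sub_sq, mul_comm]
  set cZ : ℂ[X] := (Matrix.fromBlocks 0 Y Yᴴ 0).charpoly with hcZ
  have hkey : cZ * (X : ℂ[X]) ^ p = (X : ℂ[X]) ^ q * (Pm * Pp) := by
    apply monic_sq_inj
    · exact (Matrix.charpoly_monic _).mul (Polynomial.monic_X_pow p)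
    · refine (Polynomial.monic_X_pow q).mul (Polynomial.Monic.mul ?_ ?_)
      · exact Polynomial.monic_prod_of_monic _ _
          (fun j _ => Polynomial.monic_X_sub_C _)
      · exact Polynomial.monic_prod_of_monic _ _
          (fun j _ => by simpa using Polynomial.monic_X_add_C ((sig j : ℝ) : ℂ))
    · have e1 : (cZ * (X : ℂ[X]) ^ p) ^ 2 = cZ ^ 2 * (X : ℂ[X]) ^ (2 * p) := by
        rw [mul_pow, ← pow_mul, mul_comm p 2]
      have e2 : ((X : ℂ[X]) ^ q * (Pm * Pp)) ^ 2
          = (X : ℂ[X]) ^ (2 * q) * (Pm * Pp) ^ 2 := by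
        rw [mul_pow, ← pow_mul, mul_comm q 2]
      rw [e1, e2, hcZ, charpoly_sq p q Y, ← hdetp]
      calc Matrix.det ((X : ℂ[X]) ^ 2 • 1 - (Y * Yᴴ).map C)
            * Matrix.det ((X : ℂ[X]) ^ 2 • 1 - (Yᴴ * Y).map C) * (X : ℂ[X]) ^ (2 * p)
          = Matrix.det ((X : ℂ[X]) ^ 2 • 1 - (Y * Yᴴ).map C)
            * ((X : ℂ[X]) ^ (2 * p) * Matrix.det ((X : ℂ[X]) ^ 2 • 1 - (Yᴴ * Y).map C)) := by
            ring
        _ = Matrix.det ((X : ℂ[X]) ^ 2 • 1 - (Y * Yᴴ).map C)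
            * ((X : ℂ[X]) ^ (2 * q) * Matrix.det ((X : ℂ[X]) ^ 2 • 1 - (Y * Yᴴ).map C)) := by
            rw [cross_identity p q Y]
        _ = (X : ℂ[X]) ^ (2 * q) * Matrix.det ((X : ℂ[X]) ^ 2 • 1 - (Y * Yᴴ).map C) ^ 2 := by
            ring
  have hcast : ∀ j : Fin p, hatPQ p q s (Fin.castAdd q j) = sig j := by
    intro j
    unfold hatPQ
    by_cases hj : ((Fin.castAdd q j : Fin (p + q)) : ℕ) < q
    · rw [dif_pos hj, hs_eq]
      congr 1 <;> simp [Fin.ext_iff]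
    · rw [dif_neg hj, dif_pos (by simp [Fin.coe_castAdd, j.isLt])]
      have : q ≤ (j : ℕ) := by simpa using hj
      exact (hsig_zero j this).symm
  have hnat : ∀ i : Fin q, hatPQ p q s (Fin.natAdd p i) = -(s (Fin.rev i)) := by
    intro i
    unfold hatPQ
    have hv : ((Fin.natAdd p i : Fin (p + q)) : ℕ) = p + (i : ℕ) := rfl
    rw [dif_neg (by rw [hv]; omega), dif_neg (by rw [hv]; omega)]
    congr 1
    apply congrArg s
    apply Fin.ext
    rw [Fin.val_rev]
    show p + q - 1 - ((Fin.natAdd p i : Fin (p + q)) : ℕ) = q - ((i : ℕ) + 1)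
    rw [hv]
    have := i.isLt
    omega
  have hsplit : (∏ i : Fin (p + q), ((X : ℂ[X]) - C ((hatPQ p q s i : ℝ) : ℂ)))
      = Pm * ∏ i : Fin q, ((X : ℂ[X]) + C ((s i : ℝ) : ℂ)) := by
    rw [Fin.prod_univ_add]
    congr 1
    · rw [hPm]
      exact Finset.prod_congr rfl (fun j _ => by rw [hcast j])
    · calc (∏ i : Fin q, ((X : ℂ[X]) - C ((hatPQ p q s (Fin.natAdd p i) : ℝ) : ℂ)))
          = ∏ i : Fin q, ((X : ℂ[X]) + C ((s (Fin.rev i) : ℝ) : ℂ)) := by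
            apply Finset.prod_congr rfl
            intro i _
            rw [hnat i]
            push_cast
            rw [map_neg, sub_neg_eq_add]
        _ = ∏ i : Fin q, ((X : ℂ[X]) + C ((s i : ℝ) : ℂ)) :=
            Equiv.prod_comp Fin.revPerm (fun i => (X : ℂ[X]) + C ((s i : ℝ) : ℂ))
  have hcardP : (Finset.univ.filter (fun j : Fin p => (j : ℕ) < q)).card = q := by
    have hb : (Finset.univ.filter (fun j : Fin p => (j : ℕ) < q)).card
        = (Finset.univ : Finset (Fin q)).card := by
      apply Finset.card_bij (fun (a : Fin p) (ha : a ∈ Finset.univ.filter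
        (fun j : Fin p => (j : ℕ) < q)) => (⟨(a : ℕ), (Finset.mem_filter.mp ha).2⟩ : Fin q))
      · intro a ha
        exact Finset.mem_univ _
      · intro a ha b hb hab
        apply Fin.ext
        simpa [Fin.mk.injEq] using hab
      · intro b hb
        refine ⟨Fin.castLE hpq b, ?_, by apply Fin.ext; simp⟩
        rw [Finset.mem_filter]
        exact ⟨Finset.mem_univ _, by simp [b.isLt]⟩
    rw [hb, Finset.card_univ, Fintype.card_fin]
  have hPp_split : (X : ℂ[X]) ^ q * Pp
      = (∏ i : Fin q, ((X : ℂ[X]) + C ((s i : ℝ) : ℂ))) * (X : ℂ[X]) ^ p := by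
    have hfilter : Pp = (∏ i : Fin q, ((X : ℂ[X]) + C ((s i : ℝ) : ℂ)))
        * (X : ℂ[X]) ^ (p - q) := by
      rw [hPp, ← Finset.prod_filter_mul_prod_filter_not Finset.univ
        (fun j : Fin p => (j : ℕ) < q)]
      congr 1
      · apply Finset.prod_bij (fun (a : Fin p) (ha : a ∈ Finset.univ.filter
          (fun j : Fin p => (j : ℕ) < q)) =>
            (⟨(a : ℕ), (Finset.mem_filter.mp ha).2⟩ : Fin q))
        · intro a ha
          exact Finset.mem_univ _
        · intro a ha b hb hab
          apply Fin.ext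
          simpa [Fin.mk.injEq] using hab
        · intro b hb
          refine ⟨Fin.castLE hpq b, ?_, by apply Fin.ext; simp⟩
          rw [Finset.mem_filter]
          exact ⟨Finset.mem_univ _, by simp [b.isLt]⟩
        · intro a ha
          rw [hs_eq]
          congr 2 <;> simp [Fin.ext_iff]
      · have hcardN : (Finset.univ.filter (fun j : Fin p => ¬ (j : ℕ) < q)).card = p - q := by
          have := Finset.card_filter_add_card_filter_not
            (s := (Finset.univ : Finset (Fin p))) (p := fun j : Fin p => (j : ℕ) < q)
          rw [Finset.card_univ, Fintype.card_fin, hcardP] at this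
          omega
        calc (∏ j ∈ Finset.univ.filter (fun j : Fin p => ¬ (j : ℕ) < q),
              ((X : ℂ[X]) + C ((sig j : ℝ) : ℂ)))
            = ∏ _j ∈ Finset.univ.filter (fun j : Fin p => ¬ (j : ℕ) < q), (X : ℂ[X]) := by
              apply Finset.prod_congr rfl
              intro j hj
              rw [Finset.mem_filter] at hj
              rw [hsig_zero j (by omega)]
              simp
          _ = (X : ℂ[X]) ^ (p - q) := by rw [Finset.prod_const, hcardN]
    rw [hfilter]
    have hpow : (X : ℂ[X]) ^ (p - q) * (X : ℂ[X]) ^ q = (X : ℂ[X]) ^ p := by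
      rw [← pow_add]
      congr 1
      omega
    calc (X : ℂ[X]) ^ q * ((∏ i : Fin q, ((X : ℂ[X]) + C ((s i : ℝ) : ℂ)))
          * (X : ℂ[X]) ^ (p - q))
        = (∏ i : Fin q, ((X : ℂ[X]) + C ((s i : ℝ) : ℂ)))
          * ((X : ℂ[X]) ^ (p - q) * (X : ℂ[X]) ^ q) := by ring
      _ = _ := by rw [hpow]
  have hprod_eq : (∏ i : Fin (p + q), ((X : ℂ[X]) - C ((hatPQ p q s i : ℝ) : ℂ)))
      * (X : ℂ[X]) ^ p = cZ * (X : ℂ[X]) ^ p := by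
    rw [hsplit, hkey]
    rw [show (X : ℂ[X]) ^ q * (Pm * Pp) = Pm * ((X : ℂ[X]) ^ q * Pp) from by ring,
      hPp_split]
    ring
  have hfinal : cZ = ∏ i : Fin (p + q), ((X : ℂ[X]) - C ((hatPQ p q s i : ℝ) : ℂ)) :=
    (mul_right_cancel₀ (pow_ne_zero p Polynomial.X_ne_zero) hprod_eq).symm
  apply eigVec_eq_of_roots hZ (hatPQ_antitone hpq hs_anti hs_nonneg)
  have hchar : (hatM p q Y).charpoly = cZ := by
    rw [hcZ]
    unfold hatM
    exact Matrix.charpoly_reindex _ _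
  rw [hchar, hfinal, roots_prod_X_sub_C']

theorem eigVec_congr {k : ℕ} {M N : Matrix (Fin k) (Fin k) ℂ} (h : M = N)
    (hM : M.IsHermitian) (hN : N.IsHermitian) : eigVec M hM = eigVec N hN := by
  subst h
  rfl

theorem eigVec_smul {k : ℕ} {A : Matrix (Fin k) (Fin k) ℂ} (hA : A.IsHermitian) {c : ℝ}
    (hc : 0 ≤ c) (hcA : (((c : ℝ) : ℂ) • A).IsHermitian) :
    eigVec (((c : ℝ) : ℂ) • A) hcA = fun i => c * eigVec A hA i := by
  apply eigVec_eq_of_roots hcA (d := fun i => c * eigVec A hA i)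
  · intro a b hab
    exact mul_le_mul_of_nonneg_left (eigVec_antitone A hA hab) hc
  · have h := roots_charpoly_smul_conj hA c 1 1 (one_mul 1) (one_mul 1)
    rw [one_mul, mul_one] at h
    rw [h]
    exact (multiset_map_perm (fun i => ((c * hA.eigenvalues i : ℝ) : ℂ))
      (Fin.revPerm.trans (Tuple.sort hA.eigenvalues))).symm

theorem eigVec_neg_conj {k : ℕ} {A P : Matrix (Fin k) (Fin k) ℂ} (hA : A.IsHermitian)
    (hPP : P * P = 1) (hH : (-(P * A * P)).IsHermitian) :
    eigVec (-(P * A * P)) hH = fun i => -(eigVec A hA) i.rev := by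
  apply eigVec_eq_of_roots hH (d := fun i => -(eigVec A hA) i.rev)
  · intro a b hab
    apply neg_le_neg
    exact eigVec_antitone A hA (Fin.rev_le_rev.mpr hab)
  · have h := roots_charpoly_smul_conj hA (-1) P P hPP hPP
    have hm : P * (((-1 : ℝ) : ℂ) • A) * P = -(P * A * P) := by
      have : ((-1 : ℝ) : ℂ) = -1 := by norm_num
      rw [this, neg_one_smul, Matrix.mul_neg, Matrix.neg_mul]
    rw [hm] at h
    rw [h]
    have hfun : (fun i => ((-1 * hA.eigenvalues i : ℝ) : ℂ))
        = fun i => ((-(hA.eigenvalues i) : ℝ) : ℂ) := by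
      funext i
      norm_num
    rw [hfun]
    have : (fun i : Fin k => ((-(eigVec A hA) i.rev : ℝ) : ℂ))
        = fun i : Fin k => ((-(hA.eigenvalues ((Fin.revPerm.trans
            (Tuple.sort hA.eigenvalues)) i.rev)) : ℝ) : ℂ) := rfl
    rw [this]
    have hcomp : (fun i : Fin k => ((-(hA.eigenvalues ((Fin.revPerm.trans
        (Tuple.sort hA.eigenvalues)) i.rev)) : ℝ) : ℂ))
        = fun i : Fin k => ((fun j => ((-(hA.eigenvalues j) : ℝ) : ℂ))
            ((Fin.revPerm.trans (Fin.revPerm.trans (Tuple.sort hA.eigenvalues))) i)) := rfl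
    rw [hcomp]
    exact (multiset_map_perm (fun j => ((-(hA.eigenvalues j) : ℝ) : ℂ))
      (Fin.revPerm.trans (Fin.revPerm.trans (Tuple.sort hA.eigenvalues)))).symm

theorem sval_smul_two {a b : ℕ} (Y : Matrix (Fin a) (Fin b) ℂ) (i : ℕ) :
    sval ((2 : ℂ) • Y) i = 2 * sval Y i := by
  unfold sval
  by_cases h : i < a
  · rw [dif_pos h, dif_pos h]
    have hmat : ((2 : ℂ) • Y) * ((2 : ℂ) • Y)ᴴ = ((4 : ℝ) : ℂ) • (Y * Yᴴ) := by
      rw [Matrix.conjTranspose_smul, Matrix.smul_mul, Matrix.mul_smul, smul_smul]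
      congr 1
      have hst : star (2 : ℂ) = 2 := by simp
      rw [hst]
      norm_num
    have hc : eigVec (((2 : ℂ) • Y) * ((2 : ℂ) • Y)ᴴ)
        (Matrix.isHermitian_mul_conjTranspose_self _)
        = eigVec (((4 : ℝ) : ℂ) • (Y * Yᴴ))
          (by rw [← hmat]; exact Matrix.isHermitian_mul_conjTranspose_self _) :=
      eigVec_congr hmat _ _
    rw [hc, eigVec_smul (Matrix.isHermitian_mul_conjTranspose_self Y) (by norm_num : (0:ℝ) ≤ 4)]
    have h4 : Real.sqrt 4 = 2 := by
      rw [show (4 : ℝ) = 2 ^ 2 by norm_num, Real.sqrt_sq (by norm_num : (0:ℝ) ≤ 2)]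
    rw [Real.sqrt_mul (by norm_num : (0:ℝ) ≤ 4), h4]
  · rw [dif_neg h, dif_neg h, mul_zero]

theorem hatPQ_smul_two (p q : ℕ) (s : Fin q → ℝ) :
    hatPQ p q (fun i => 2 * s i) = fun i => 2 * hatPQ p q s i := by
  funext i
  unfold hatPQ
  split_ifs <;> ring

theorem hatM_smul_two (p q : ℕ) (B : Matrix (Fin p) (Fin q) ℂ) :
    (2 : ℂ) • hatM p q B = hatM p q ((2 : ℂ) • B) := by
  unfold hatM
  have h1 : (2 : ℂ) • Matrix.fromBlocks 0 B Bᴴ 0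
      = Matrix.fromBlocks 0 ((2 : ℂ) • B) (((2 : ℂ) • B)ᴴ) 0 := by
    have hstar : ((2 : ℂ) • B)ᴴ = (2 : ℂ) • Bᴴ := by
      rw [Matrix.conjTranspose_smul]
      have hst : star (2 : ℂ) = 2 := by simp
      rw [hst]
    rw [hstar, Matrix.fromBlocks_smul, smul_zero, smul_zero]
  rw [← h1]
  simp [Matrix.reindex_apply, Matrix.submatrix_smul]

end HornAux

open HornAux in
theorem stmt_0 (p q : ℕ) (hq : 1 ≤ q) (hpq : q ≤ p)
    (X Ipq Xt : Matrix (Fin (p + q)) (Fin (p + q)) ℂ) (hX : X.IsHermitian)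
    (hIpq : Ipq = Matrix.reindex finSumFinEquiv finSumFinEquiv
      (Matrix.fromBlocks (1 : Matrix (Fin p) (Fin p) ℂ) 0 0 (-1 : Matrix (Fin q) (Fin q) ℂ)))
    (hXt : Xt = -(Ipq * X * Ipq))
    (s : Fin q → ℝ) (hs : ∀ i : Fin q, s i = sval (blockTR p q X) (i : ℕ)) :
    ∃ hH : Xt.IsHermitian,
      eigVec Xt hH = starVec (eigVec X hX) ∧
      X + Xt = (2 : ℂ) • hatM p q (blockTR p q X) ∧
      eigVec (X + Xt) (hX.add hH) = (fun i => 2 * hatPQ p q s i) ∧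
      (eigVec X hX, starVec (eigVec X hX), fun i => 2 * hatPQ p q s i) ∈ Horn (p + q) := by
  classical
  have hIherm : Ipqᴴ = Ipq := Ipq_herm p q Ipq hIpq
  have hIsq : Ipq * Ipq = 1 := Ipq_sq p q Ipq hIpq
  have h0 : (Ipq * X * Ipq)ᴴ = Ipq * X * Ipq := by
    rw [Matrix.conjTranspose_mul, Matrix.conjTranspose_mul, hIherm, hX.eq, Matrix.mul_assoc]
  have hH : Xt.IsHermitian := by
    rw [hXt]
    unfold Matrix.IsHermitian
    rw [Matrix.conjTranspose_neg, h0]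
  have hward : (-(Ipq * X * Ipq)).IsHermitian := by
    rw [← hXt]
    exact hH
  have h2 : eigVec Xt hH = starVec (eigVec X hX) := by
    have := (eigVec_congr hXt hH hward).trans (eigVec_neg_conj hX hIsq hward)
    exact this
  have h3 : X + Xt = (2 : ℂ) • hatM p q (blockTR p q X) := by
    rw [hXt, ← sub_eq_add_neg]
    exact key_block p q X hX Ipq hIpq
  have hB : X + Xt = hatM p q ((2 : ℂ) • blockTR p q X) :=
    h3.trans (hatM_smul_two p q _)
  have hZH : (hatM p q ((2 : ℂ) • blockTR p q X)).IsHermitian := by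
    rw [← hB]
    exact hX.add hH
  have h4 : eigVec (X + Xt) (hX.add hH) = (fun i => 2 * hatPQ p q s i) := by
    have hc : eigVec (X + Xt) (hX.add hH)
        = eigVec (hatM p q ((2 : ℂ) • blockTR p q X)) hZH := eigVec_congr hB _ _
    rw [hc, eigVec_hatM p q hpq _ hZH]
    have hfun : (fun i : Fin q => sval ((2 : ℂ) • blockTR p q X) (i : ℕ))
        = fun i : Fin q => 2 * s i := by
      funext i
      rw [sval_smul_two, ← hs i]
    rw [hfun, hatPQ_smul_two p q s]
  exact ⟨hH, h2, h3, h4, ⟨X, Xt, hX, hH, rfl, h2.symm, h4.symm⟩⟩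
end

section
/- Let p ≥ q ≥ 1 and n = p + q. For every n×n complex matrix X written in blocks with X₁₂ the top-right p×q block and X₂₁ the bottom-left q×p block, one has (ŝ(X), ŝ(X₁₂)^{p,q}, ŝ(X₂₁)^{p,q}) ∈ LR(n,n), where ŝ(X) ∈ ℝ^{2n} is the hat of the full singular value vector s(X) ∈ ℝⁿ. -/
open Matrix

open Polynomial

lemma evalCharpoly {ι : Type*} [Fintype ι] [DecidableEq ι] (M : Matrix ι ι ℂ) (t : ℂ) :
    M.charpoly.eval t = (t • (1 : Matrix ι ι ℂ) - M).det := by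
  rw [Matrix.charpoly, show (Polynomial.eval t) = ⇑(Polynomial.evalRingHom t) from rfl,
    RingHom.map_det]
  congr 1
  ext i j
  by_cases h : i = j <;>
    simp [h, Matrix.charmatrix_apply, Matrix.diagonal_apply, Matrix.one_apply,
      Matrix.sub_apply, Matrix.smul_apply]

lemma charpolyHermitian {ι : Type*} [Fintype ι] [DecidableEq ι] {M : Matrix ι ι ℂ}
    (hM : M.IsHermitian) :
    M.charpoly = ∏ i, (X - C ((hM.eigenvalues i : ℝ) : ℂ)) := by
  apply Polynomial.funext
  intro t
  rw [evalCharpoly]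
  have hU := (Matrix.mem_unitaryGroup_iff).mp (hM.eigenvectorUnitary).2
  set U : Matrix ι ι ℂ := (hM.eigenvectorUnitary : Matrix ι ι ℂ) with hUdef
  have hdecomp := hM.spectral_theorem
  rw [Unitary.conjStarAlgAut_apply] at hdecomp
  have key : t • (1 : Matrix ι ι ℂ) - M
      = U * (t • 1 - diagonal (RCLike.ofReal ∘ hM.eigenvalues)) * star U := by
    rw [Matrix.mul_sub, Matrix.sub_mul, ← hdecomp]
    congr 1
    rw [Matrix.mul_smul, Matrix.mul_one, Matrix.smul_mul, hU]
  rw [key, Matrix.det_mul, Matrix.det_mul, mul_comm, ← mul_assoc, ← Matrix.det_mul,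
    show star U * U = 1 from Matrix.UnitaryGroup.star_mul_self _, Matrix.det_one, one_mul]
  rw [Matrix.smul_one_eq_diagonal, Matrix.diagonal_sub, Matrix.det_diagonal]
  simp [Polynomial.eval_prod]

section SortUniq

variable {k : ℕ}

lemma antitone_eigVec {M : Matrix (Fin k) (Fin k) ℂ} (hM : M.IsHermitian) :
    Antitone (eigVec M hM) := by
  intro i j hij
  have hm := Tuple.monotone_sort hM.eigenvalues
  exact hm (Fin.rev_le_rev.mpr hij)

lemma eigVec_comp_perm {M : Matrix (Fin k) (Fin k) ℂ} (hM : M.IsHermitian) :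
    eigVec M hM = hM.eigenvalues ∘ ⇑((Fin.revPerm).trans (Tuple.sort hM.eigenvalues)) := rfl

/-- two antitone tuples with the same multiset are equal -/
lemma antitone_unique {f g : Fin k → ℝ} (hf : Antitone f) (hg : Antitone g)
    (h : (List.ofFn f).Perm (List.ofFn g)) : f = g := by
  haveI : IsAntisymm ℝ (· ≥ ·) := ⟨fun a b h1 h2 => le_antisymm h2 h1⟩
  have sf : (List.ofFn f).Pairwise (· ≥ ·) := by
    rw [List.pairwise_ofFn]
    exact fun i j hij => hf hij.le
  have sg : (List.ofFn g).Pairwise (· ≥ ·) := by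
    rw [List.pairwise_ofFn]
    exact fun i j hij => hg hij.le
  exact List.ofFn_injective (List.Perm.eq_of_pairwise (fun _ _ _ _ h1 h2 => le_antisymm h2 h1) sf sg h)

end SortUniq

/-- If the charpoly of a Hermitian matrix is `∏ (X - C vᵢ)` with `v` antitone,
then `eigVec` equals `v`. -/
lemma eigVec_eq_of_charpoly {k : ℕ} {M : Matrix (Fin k) (Fin k) ℂ} (hM : M.IsHermitian)
    {v : Fin k → ℝ} (hv : Antitone v)
    (h : M.charpoly = ∏ i, (X - C ((v i : ℝ) : ℂ))) : eigVec M hM = v := by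
  have hcp : ∏ i, (X - C ((hM.eigenvalues i : ℝ) : ℂ)) = ∏ i, (X - C ((v i : ℝ) : ℂ)) := by
    rw [← charpolyHermitian hM, h]
  -- multiset equality of complex roots
  have hms : Multiset.map (fun i => ((hM.eigenvalues i : ℝ) : ℂ)) Finset.univ.val
      = Multiset.map (fun i => ((v i : ℝ) : ℂ)) Finset.univ.val := by
    have := congrArg Polynomial.roots hcp
    rwa [Finset.prod_eq_multiset_prod, Finset.prod_eq_multiset_prod,
      show (Multiset.map (fun i => X - C ((hM.eigenvalues i : ℝ) : ℂ)) Finset.univ.val)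
        = Multiset.map (fun a => X - C a)
          (Multiset.map (fun i => ((hM.eigenvalues i : ℝ) : ℂ)) Finset.univ.val) by
        rw [Multiset.map_map]; rfl,
      show (Multiset.map (fun i => X - C ((v i : ℝ) : ℂ)) Finset.univ.val)
        = Multiset.map (fun a => X - C a)
          (Multiset.map (fun i => ((v i : ℝ) : ℂ)) Finset.univ.val) by
        rw [Multiset.map_map]; rfl,
      Polynomial.roots_multiset_prod_X_sub_C, Polynomial.roots_multiset_prod_X_sub_C] at this
  -- pull back to real multisets
  have hms' : Multiset.map hM.eigenvalues Finset.univ.val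
      = Multiset.map v Finset.univ.val := by
    apply Multiset.map_injective (f := fun x : ℝ => (x : ℂ)) Complex.ofReal_injective
    rwa [Multiset.map_map, Multiset.map_map]
  -- convert to list perm
  have hperm : (List.ofFn hM.eigenvalues).Perm (List.ofFn v) := by
    rw [← Multiset.coe_eq_coe]
    have huniv : (Finset.univ.val : Multiset (Fin k)) = ↑(List.finRange k) := by
      rfl
    rw [List.ofFn_eq_map, List.ofFn_eq_map, ← Multiset.map_coe, ← Multiset.map_coe, ← huniv]
    exact hms'
  have hperm2 : (List.ofFn (eigVec M hM)).Perm (List.ofFn v) := by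
    refine List.Perm.trans ?_ hperm
    rw [eigVec_comp_perm hM]
    exact Equiv.Perm.ofFn_comp_perm _ _
  exact antitone_unique (antitone_eigVec hM) hv hperm2

lemma det_smul_one_sub {m : ℕ} (N : Matrix (Fin m) (Fin m) ℂ) {t : ℂ} (ht : t ≠ 0) :
    (t • (1 : Matrix (Fin m) (Fin m) ℂ) - N).det = t ^ m * (1 - t⁻¹ • N).det := by
  have key : t • (1 : Matrix (Fin m) (Fin m) ℂ) - N = t • (1 - t⁻¹ • N) := by
    rw [smul_sub, smul_smul, mul_inv_cancel₀ ht, one_smul]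
  rw [key, Matrix.det_smul, Fintype.card_fin]

/-- det(1 - c•N) for Hermitian N, c ≠ 0. -/
lemma det_one_sub_smul_hermitian {m : ℕ} {N : Matrix (Fin m) (Fin m) ℂ} (hN : N.IsHermitian)
    {c : ℂ} (hc : c ≠ 0) :
    (1 - c • N).det = c ^ m * ∏ i, (c⁻¹ - ((hN.eigenvalues i : ℝ) : ℂ)) := by
  have key : (1 : Matrix (Fin m) (Fin m) ℂ) - c • N = c • (c⁻¹ • 1 - N) := by
    rw [smul_sub, smul_smul, mul_inv_cancel₀ hc, one_smul]
  rw [key, Matrix.det_smul, Fintype.card_fin, ← evalCharpoly, charpolyHermitian hN]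
  simp [Polynomial.eval_prod]

/-- `charpoly (Y Yᴴ) * X^b = charpoly (Yᴴ Y) * X^a` for `Y : a × b`. -/
lemma charpoly_mul_conjTranspose_comm {a b : ℕ} (Y : Matrix (Fin a) (Fin b) ℂ) :
    (Y * Yᴴ).charpoly * X ^ b = (Yᴴ * Y).charpoly * X ^ a := by
  apply Polynomial.eq_of_infinite_eval_eq
  apply Set.Infinite.mono (show ({(0:ℂ)}ᶜ : Set ℂ) ⊆ _ from ?_)
  · exact Set.Finite.infinite_compl (Set.finite_singleton 0)
  intro t ht
  have ht0 : t ≠ 0 := ht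
  simp only [Set.mem_setOf_eq, Polynomial.eval_mul, Polynomial.eval_pow, Polynomial.eval_X,
    evalCharpoly]
  rw [det_smul_one_sub _ ht0, det_smul_one_sub _ ht0]
  have hcomm : (1 - t⁻¹ • (Y * Yᴴ)).det = (1 - t⁻¹ • (Yᴴ * Y)).det := by
    rw [show t⁻¹ • (Y * Yᴴ) = (t⁻¹ • Y) * Yᴴ from (Matrix.smul_mul _ _ _).symm,
      Matrix.det_one_sub_mul_comm, Matrix.mul_smul]
  rw [hcomm]; ring

/-- Key computation: charpoly of the augmented matrix `[[0, Y],[Yᴴ, 0]]`. -/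
lemma charpoly_hat_mul {a b : ℕ} (Y : Matrix (Fin a) (Fin b) ℂ) :
    (Matrix.fromBlocks (0 : Matrix (Fin a) (Fin a) ℂ) Y Yᴴ
        (0 : Matrix (Fin b) (Fin b) ℂ)).charpoly * X ^ a
    = X ^ b * ∏ i, (X ^ 2 -
        C (((Matrix.isHermitian_mul_conjTranspose_self Y).eigenvalues i : ℝ) : ℂ)) := by
  set hN := Matrix.isHermitian_mul_conjTranspose_self Y
  apply Polynomial.eq_of_infinite_eval_eq
  apply Set.Infinite.mono (show ({(0:ℂ)}ᶜ : Set ℂ) ⊆ _ from ?_)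
  · exact Set.Finite.infinite_compl (Set.finite_singleton 0)
  intro t ht
  have ht0 : t ≠ 0 := ht
  simp only [Set.mem_setOf_eq, Polynomial.eval_mul, Polynomial.eval_pow, Polynomial.eval_X,
    evalCharpoly, Polynomial.eval_prod, Polynomial.eval_sub, Polynomial.eval_C]
  have h1 : t • (1 : Matrix (Fin a ⊕ Fin b) (Fin a ⊕ Fin b) ℂ)
      - Matrix.fromBlocks 0 Y Yᴴ 0
      = t • Matrix.fromBlocks 1 (-(t⁻¹ • Y)) (-(t⁻¹ • Yᴴ)) 1 := by
    ext i j
    rcases i with i | i <;> rcases j with j | j <;>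
      simp [Matrix.sub_apply, Matrix.smul_apply, Matrix.one_apply,
        Matrix.fromBlocks_apply₁₁, Matrix.fromBlocks_apply₁₂,
        Matrix.fromBlocks_apply₂₁, Matrix.fromBlocks_apply₂₂, Sum.inl.injEq, Sum.inr.injEq,
        apply_ite]
    all_goals try (split_ifs with h <;> simp [h])
    all_goals field_simp
  rw [h1, Matrix.det_smul, Matrix.det_fromBlocks_one₂₂, Fintype.card_sum, Fintype.card_fin,
    Fintype.card_fin]
  have h2 : (1 : Matrix (Fin a) (Fin a) ℂ) - -(t⁻¹ • Y) * -(t⁻¹ • Yᴴ)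
      = 1 - (t⁻¹ * t⁻¹) • (Y * Yᴴ) := by
    rw [Matrix.neg_mul, Matrix.mul_neg, neg_neg, Matrix.smul_mul, Matrix.mul_smul, smul_smul]
  have hc : (t⁻¹ * t⁻¹ : ℂ) ≠ 0 := mul_ne_zero (inv_ne_zero ht0) (inv_ne_zero ht0)
  rw [h2, det_one_sub_smul_hermitian hN hc]
  have hcinv : (t⁻¹ * t⁻¹ : ℂ)⁻¹ = t ^ 2 := by
    rw [mul_inv, inv_inv]; ring
  rw [hcinv]
  rw [show (∏ i, (t ^ 2 - ((hN.eigenvalues i : ℝ) : ℂ))) = ∏ i, ((t:ℂ) ^ 2 - ((hN.eigenvalues i : ℝ) : ℂ)) from rfl]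
  field_simp
  calc _ = (t ^ 2) ^ a * ((t ^ 2) ^ a)⁻¹ * t ^ b * ∏ x, (t ^ 2 - ((hN.eigenvalues x : ℝ) : ℂ)) := by
          rw [one_div, inv_pow]; ring
    _ = _ := by rw [mul_inv_cancel₀ (pow_ne_zero _ (pow_ne_zero _ ht0)), one_mul, mul_comm]

lemma prod_hatPQ {p q : ℕ} (hqp : q ≤ p) (s : Fin q → ℝ) :
    ∏ i : Fin (p + q), (X - C ((hatPQ p q s i : ℝ) : ℂ))
      = X ^ (p - q) * ∏ j : Fin q, (X ^ 2 - (C ((s j : ℝ) : ℂ)) ^ 2) := by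
  classical
  set F : ℕ → Polynomial ℂ :=
    fun i => if h : i < p + q then (X - C ((hatPQ p q s ⟨i, h⟩ : ℝ) : ℂ)) else 1 with hF
  set G : ℕ → Polynomial ℂ :=
    fun j => if h : j < q then (X - C ((s ⟨j, h⟩ : ℝ) : ℂ)) else 1 with hG
  set H : ℕ → Polynomial ℂ :=
    fun j => if h : j < q then (X + C ((s ⟨j, h⟩ : ℝ) : ℂ)) else 1 with hH
  have step0 : ∏ i : Fin (p + q), (X - C ((hatPQ p q s i : ℝ) : ℂ))
      = ∏ i ∈ Finset.range (p + q), F i := by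
    rw [← Fin.prod_univ_eq_prod_range F (p + q)]
    apply Finset.prod_congr rfl
    intro i _
    simp only [hF, Fin.is_lt, dif_pos, Fin.eta]
  have step1 : ∏ i ∈ Finset.range (p + q), F i
      = (∏ i ∈ Finset.range p, F i) * ∏ i ∈ Finset.range q, F (p + i) :=
    Finset.prod_range_add F p q
  have step2 : ∏ i ∈ Finset.range p, F i
      = (∏ i ∈ Finset.range q, F i) * ∏ i ∈ Finset.range (p - q), F (q + i) := by
    have := Finset.prod_range_add F q (p - q)
    rwa [Nat.add_sub_cancel' hqp] at this
  have low : ∏ i ∈ Finset.range q, F i = ∏ j : Fin q, (X - C ((s j : ℝ) : ℂ)) := by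
    rw [show ∏ i ∈ Finset.range q, F i = ∏ i ∈ Finset.range q, G i from
      Finset.prod_congr rfl (by
        intro i hi
        have hiq : i < q := Finset.mem_range.mp hi
        have hipq : i < p + q := by omega
        simp only [hF, hG, dif_pos hiq, dif_pos hipq]
        congr 2
        rw [hatPQ, dif_pos hiq]),
      ← Fin.prod_univ_eq_prod_range G q]
    apply Finset.prod_congr rfl
    intro j _
    simp only [hG, Fin.is_lt, dif_pos, Fin.eta]
  have mid : ∏ i ∈ Finset.range (p - q), F (q + i) = X ^ (p - q) := by
    rw [Finset.prod_congr rfl (g := fun _ => (X : Polynomial ℂ)) (by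
      intro i hi
      have hi' : i < p - q := Finset.mem_range.mp hi
      have h1 : q + i < p + q := by omega
      have h2 : ¬ (q + i < q) := by omega
      have h3 : q + i < p := by omega
      simp only [hF, dif_pos h1]
      rw [hatPQ, dif_neg h2, dif_pos h3]
      simp), Finset.prod_const, Finset.card_range]
  have top : ∏ i ∈ Finset.range q, F (p + i) = ∏ j : Fin q, (X + C ((s j : ℝ) : ℂ)) := by
    rw [Finset.prod_congr rfl (g := fun i => H (q - 1 - i)) (by
      intro i hi
      have hiq : i < q := Finset.mem_range.mp hi
      have h1 : p + i < p + q := by omega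
      have h2 : ¬ (p + i < q) := by omega
      have h3 : ¬ (p + i < p) := by omega
      have h4 : q - 1 - i < q := by omega
      simp only [hF, hH, dif_pos h1, dif_pos h4]
      rw [hatPQ, dif_neg h2, dif_neg h3]
      push_cast
      rw [map_neg, sub_neg_eq_add]
      congr 3
      simp only [show p + q - 1 - (p + i) = q - 1 - i from by omega]), Finset.prod_range_reflect H q, ← Fin.prod_univ_eq_prod_range H q]
    apply Finset.prod_congr rfl
    intro j _
    simp only [hH, Fin.is_lt, dif_pos, Fin.eta]
  have hAB : (∏ j : Fin q, (X - C ((s j : ℝ) : ℂ))) * ∏ j : Fin q, (X + C ((s j : ℝ) : ℂ))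
      = ∏ j : Fin q, (X ^ 2 - (C ((s j : ℝ) : ℂ)) ^ 2) := by
    rw [← Finset.prod_mul_distrib]
    exact Finset.prod_congr rfl (fun j _ => by ring)
  rw [step0, step1, step2, low, mid, top, mul_right_comm, hAB, mul_comm]

open scoped ComplexOrder

lemma prod_comp_eigVec {k : ℕ} {M : Matrix (Fin k) (Fin k) ℂ} (hM : M.IsHermitian)
    {β : Type*} [CommMonoid β] (f : ℝ → β) :
    ∏ i, f (eigVec M hM i) = ∏ i, f (hM.eigenvalues i) := by
  rw [eigVec_comp_perm hM]
  exact Equiv.prod_comp _ (fun x => f (hM.eigenvalues x))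

lemma eigVec_nonneg {k : ℕ} {M : Matrix (Fin k) (Fin k) ℂ} (hM : M.IsHermitian)
    (hpsd : M.PosSemidef) (i : Fin k) : 0 ≤ eigVec M hM i := by
  have := hpsd.eigenvalues_nonneg
  exact this _

lemma antitone_hatPQ {p q : ℕ} (hqp : q ≤ p) {s : Fin q → ℝ} (hs : Antitone s)
    (h0 : ∀ i, 0 ≤ s i) : Antitone (hatPQ p q s) := by
  intro i j hij
  unfold hatPQ
  have hij' : (i : ℕ) ≤ (j : ℕ) := hij
  by_cases hi1 : (i : ℕ) < q <;> by_cases hj1 : (j : ℕ) < q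
  · rw [dif_pos hi1, dif_pos hj1]
    exact hs (show (⟨i, hi1⟩ : Fin q) ≤ ⟨j, hj1⟩ from hij')
  · rw [dif_pos hi1, dif_neg hj1]
    by_cases hj2 : (j : ℕ) < p
    · rw [dif_pos hj2]; exact h0 _
    · rw [dif_neg hj2]
      exact le_trans (neg_nonpos.mpr (h0 _)) (h0 _)
  · omega
  · rw [dif_neg hi1, dif_neg hj1]
    by_cases hi2 : (i : ℕ) < p <;> by_cases hj2 : (j : ℕ) < p
    · rw [dif_pos hi2, dif_pos hj2]
    · rw [dif_pos hi2, dif_neg hj2]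
      exact neg_nonpos.mpr (h0 _)
    · omega
    · rw [dif_neg hi2, dif_neg hj2]
      apply neg_le_neg
      apply hs
      show (p + q - 1 - (j : ℕ)) ≤ (p + q - 1 - (i : ℕ))
      omega

lemma antitone_svalFin {a b q : ℕ} (hqa : q ≤ a) (Y : Matrix (Fin a) (Fin b) ℂ) :
    Antitone (fun i : Fin q => sval Y (i : ℕ)) := by
  intro i j hij
  have hi : (i : ℕ) < a := lt_of_lt_of_le i.isLt hqa
  have hj : (j : ℕ) < a := lt_of_lt_of_le j.isLt hqa
  simp only [sval, dif_pos hi, dif_pos hj]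
  apply Real.sqrt_le_sqrt
  exact antitone_eigVec _ (show (⟨i, hi⟩ : Fin a) ≤ ⟨j, hj⟩ from (hij : (i:ℕ) ≤ j))

lemma sval_nonneg {a b : ℕ} (Y : Matrix (Fin a) (Fin b) ℂ) (i : ℕ) : 0 ≤ sval Y i := by
  unfold sval
  split_ifs
  · exact Real.sqrt_nonneg _
  · exact le_refl 0

lemma sval_sq {a b : ℕ} (Y : Matrix (Fin a) (Fin b) ℂ) (j : Fin a) :
    (sval Y (j : ℕ)) ^ 2
      = eigVec (Y * Yᴴ) (Matrix.isHermitian_mul_conjTranspose_self Y) j := by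
  simp only [sval, dif_pos j.isLt, Fin.eta]
  exact Real.sq_sqrt (eigVec_nonneg _ (Matrix.posSemidef_self_mul_conjTranspose Y) j)

lemma prod_pad0 {p q : ℕ} (hqp : q ≤ p) (v : Fin q → ℝ) :
    ∏ i : Fin p, (X - C (((if h : (i : ℕ) < q then v ⟨i, h⟩ else 0) : ℝ) : ℂ))
      = (∏ j : Fin q, (X - C ((v j : ℝ) : ℂ))) * X ^ (p - q) := by
  classical
  set F : ℕ → Polynomial ℂ := fun i =>
    if h : i < q then (X - C ((v ⟨i, h⟩ : ℝ) : ℂ)) else X with hF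
  have step0 : ∏ i : Fin p, (X - C (((if h : (i : ℕ) < q then v ⟨i, h⟩ else 0) : ℝ) : ℂ))
      = ∏ i ∈ Finset.range p, F i := by
    rw [← Fin.prod_univ_eq_prod_range F p]
    apply Finset.prod_congr rfl
    intro i _
    by_cases h : (i : ℕ) < q
    · simp only [hF, dif_pos h]
    · simp only [hF, dif_neg h]
      simp
  have step1 : ∏ i ∈ Finset.range p, F i
      = (∏ i ∈ Finset.range q, F i) * ∏ i ∈ Finset.range (p - q), F (q + i) := by
    have := Finset.prod_range_add F q (p - q)
    rwa [Nat.add_sub_cancel' hqp] at this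
  have low : ∏ i ∈ Finset.range q, F i = ∏ j : Fin q, (X - C ((v j : ℝ) : ℂ)) := by
    rw [← Fin.prod_univ_eq_prod_range F q]
    apply Finset.prod_congr rfl
    intro j _
    simp only [hF, Fin.is_lt, dif_pos, Fin.eta]
  have mid : ∏ i ∈ Finset.range (p - q), F (q + i) = X ^ (p - q) := by
    rw [Finset.prod_congr rfl (g := fun _ => (X : Polynomial ℂ)) (by
      intro i hi
      have h2 : ¬ (q + i < q) := by omega
      simp only [hF, dif_neg h2]), Finset.prod_const, Finset.card_range]
  rw [step0, step1, low, mid]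

/-- padding: eigenvalues of `Y Yᴴ` are those of `Yᴴ Y` padded with zeros, for `q ≤ p`. -/
lemma eigVec_mul_conjTranspose_pad {p q : ℕ} (hqp : q ≤ p) (Y : Matrix (Fin p) (Fin q) ℂ) :
    eigVec (Y * Yᴴ) (Matrix.isHermitian_mul_conjTranspose_self Y)
      = fun i : Fin p => if h : (i : ℕ) < q
          then eigVec (Yᴴ * Yᴴᴴ) (Matrix.isHermitian_mul_conjTranspose_self Yᴴ) ⟨i, h⟩
          else 0 := by
  set hA := Matrix.isHermitian_mul_conjTranspose_self Y
  set hB := Matrix.isHermitian_mul_conjTranspose_self Yᴴ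
  set w : Fin p → ℝ := fun i => if h : (i : ℕ) < q then eigVec (Yᴴ * Yᴴᴴ) hB ⟨i, h⟩ else 0
    with hw
  have hBpsd : (Yᴴ * Yᴴᴴ).PosSemidef := Matrix.posSemidef_self_mul_conjTranspose Yᴴ
  have hwa : Antitone w := by
    intro i j hij
    have hij' : (i : ℕ) ≤ (j : ℕ) := hij
    by_cases hi : (i : ℕ) < q <;> by_cases hj : (j : ℕ) < q
    · simp only [hw, dif_pos hi, dif_pos hj]
      exact antitone_eigVec hB (show (⟨i, hi⟩ : Fin q) ≤ ⟨j, hj⟩ from hij')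
    · simp only [hw, dif_pos hi, dif_neg hj]
      exact eigVec_nonneg hB hBpsd _
    · omega
    · simp only [hw, dif_neg hi, dif_neg hj]
      exact le_refl 0
  refine eigVec_eq_of_charpoly hA hwa ?_
  apply mul_right_cancel₀ (pow_ne_zero q (Polynomial.X_ne_zero (R := ℂ)))
  have hcomm := charpoly_mul_conjTranspose_comm Yᴴ
  rw [Matrix.conjTranspose_conjTranspose] at hcomm
  -- hcomm : (Yᴴ * Y).charpoly * X ^ p = (Y * Yᴴ).charpoly * X ^ q  (check orientation)
  rw [show (∏ i : Fin p, (X - C ((w i : ℝ) : ℂ))) * X ^ q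
      = (∏ j : Fin q, (X - C ((eigVec (Yᴴ * Yᴴᴴ) hB j : ℝ) : ℂ))) * X ^ p from ?_]
  · rw [prod_comp_eigVec hB (fun x => X - C ((x : ℝ) : ℂ)), ← charpolyHermitian hB]
    rw [show Yᴴ * Yᴴᴴ = Yᴴ * Y from by rw [Matrix.conjTranspose_conjTranspose]]
    exact hcomm.symm
  · rw [prod_pad0 hqp _, mul_assoc, ← pow_add]
    congr 2
    omega

lemma sval_conjTranspose {p q : ℕ} (hqp : q ≤ p) (Y : Matrix (Fin p) (Fin q) ℂ)
    (i : ℕ) (hi : i < q) : sval Y i = sval Yᴴ i := by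
  have hip : i < p := lt_of_lt_of_le hi hqp
  simp only [sval, dif_pos hip, dif_pos hi]
  rw [eigVec_mul_conjTranspose_pad hqp Y]
  simp only [dif_pos hi]

/-- charpoly of the augmented matrix, `a ≤ b` version. -/
lemma charpoly_hat_eq {a b : ℕ} (hab : a ≤ b) (Y : Matrix (Fin a) (Fin b) ℂ) :
    (Matrix.fromBlocks (0 : Matrix (Fin a) (Fin a) ℂ) Y Yᴴ
        (0 : Matrix (Fin b) (Fin b) ℂ)).charpoly
      = ∏ i : Fin (b + a), (X - C ((hatPQ b a (fun j => sval Y (j : ℕ)) i : ℝ) : ℂ)) := by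
  set hN := Matrix.isHermitian_mul_conjTranspose_self Y
  apply mul_right_cancel₀ (pow_ne_zero a (Polynomial.X_ne_zero (R := ℂ)))
  rw [charpoly_hat_mul Y, prod_hatPQ hab (fun j : Fin a => sval Y (j : ℕ))]
  have h1 : ∀ j : Fin a, (C ((sval Y (j : ℕ) : ℝ) : ℂ)) ^ 2
      = C ((eigVec (Y * Yᴴ) hN j : ℝ) : ℂ) := by
    intro j
    rw [← map_pow, ← sval_sq Y j]
    push_cast
    rfl
  have hprod : (∏ j : Fin a, (X ^ 2 - (C ((sval Y (j : ℕ) : ℝ) : ℂ)) ^ 2))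
      = ∏ i : Fin a, (X ^ 2 - C ((hN.eigenvalues i : ℝ) : ℂ)) := by
    rw [← prod_comp_eigVec hN (fun x => X ^ 2 - C ((x : ℝ) : ℂ))]
    exact Finset.prod_congr rfl (fun j _ => by rw [h1 j])
  rw [hprod, mul_right_comm, ← pow_add, Nat.sub_add_cancel hab]

/-- charpoly of the augmented matrix, `b ≤ a` (swap) version. -/
lemma charpoly_hat_eq' {a b : ℕ} (hba : b ≤ a) (Y : Matrix (Fin a) (Fin b) ℂ) :
    (Matrix.fromBlocks (0 : Matrix (Fin a) (Fin a) ℂ) Y Yᴴ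
        (0 : Matrix (Fin b) (Fin b) ℂ)).charpoly
      = ∏ i : Fin (a + b), (X - C ((hatPQ a b (fun j => sval Y (j : ℕ)) i : ℝ) : ℂ)) := by
  have hswap : (Matrix.fromBlocks (0 : Matrix (Fin b) (Fin b) ℂ) Yᴴ Yᴴᴴ
      (0 : Matrix (Fin a) (Fin a) ℂ)).submatrix Sum.swap Sum.swap
      = Matrix.fromBlocks (0 : Matrix (Fin a) (Fin a) ℂ) Y Yᴴ
        (0 : Matrix (Fin b) (Fin b) ℂ) := by
    rw [Matrix.fromBlocks_submatrix_sum_swap_sum_swap, Matrix.conjTranspose_conjTranspose]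
  have hcp : (Matrix.fromBlocks (0 : Matrix (Fin a) (Fin a) ℂ) Y Yᴴ
      (0 : Matrix (Fin b) (Fin b) ℂ)).charpoly
      = (Matrix.fromBlocks (0 : Matrix (Fin b) (Fin b) ℂ) Yᴴ Yᴴᴴ
        (0 : Matrix (Fin a) (Fin a) ℂ)).charpoly := by
    rw [← hswap, show (Sum.swap : Fin a ⊕ Fin b → Fin b ⊕ Fin a)
      = ⇑((Equiv.sumComm (Fin b) (Fin a)).symm) from rfl]
    rw [← Matrix.reindex_apply, Matrix.charpoly_reindex]
  rw [hcp, charpoly_hat_eq hba Yᴴ]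
  apply Finset.prod_congr rfl
  intro i _
  congr 2
  have : (fun j : Fin b => sval Yᴴ (j : ℕ)) = fun j : Fin b => sval Y (j : ℕ) := by
    funext j
    exact (sval_conjTranspose hba Y (j : ℕ) j.isLt).symm
  rw [this]

def phiEquiv (p q : ℕ) : ((Fin p ⊕ Fin q) ⊕ (Fin q ⊕ Fin p)) ≃ ((Fin p ⊕ Fin q) ⊕ (Fin p ⊕ Fin q)) where
  toFun x := match x with
    | .inl (.inl i) => .inl (.inl i)
    | .inl (.inr j) => .inr (.inr j)
    | .inr (.inl j) => .inl (.inr j)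
    | .inr (.inr i) => .inr (.inl i)
  invFun x := match x with
    | .inl (.inl i) => .inl (.inl i)
    | .inl (.inr j) => .inr (.inl j)
    | .inr (.inl i) => .inr (.inr i)
    | .inr (.inr j) => .inl (.inr j)
  left_inv := by rintro ((i|j)|(j|i)) <;> rfl
  right_inv := by rintro ((i|j)|(i|j)) <;> rfl

def cEquiv2 (p q : ℕ) : Fin (p + q) ≃ (Fin q ⊕ Fin p) :=
  (finCongr (Nat.add_comm p q)).trans finSumFinEquiv.symm

def bigEquiv (p q : ℕ) : Fin ((p + q) + (p + q)) ≃ (Fin (p + q) ⊕ Fin (p + q)) :=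
  (finSumFinEquiv.symm).trans <|
    (Equiv.sumCongr (finSumFinEquiv (m := p) (n := q)).symm (cEquiv2 p q)).trans <|
    (phiEquiv p q).trans
    (Equiv.sumCongr finSumFinEquiv finSumFinEquiv)

lemma bigEquiv_apply_castAdd (p q : ℕ) (i : Fin (p + q)) :
    bigEquiv p q (Fin.castAdd (p + q) i)
      = Sum.elim (fun a => Sum.inl (Fin.castAdd q a)) (fun b => Sum.inr (Fin.natAdd p b))
          (finSumFinEquiv.symm i) := by
  simp only [bigEquiv, Equiv.trans_apply, finSumFinEquiv_symm_apply_castAdd,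
    Equiv.sumCongr_apply, Sum.map_inl]
  rcases h : finSumFinEquiv.symm i with a | b <;> rfl

lemma bigEquiv_apply_natAdd (p q : ℕ) (j : Fin (p + q)) :
    bigEquiv p q (Fin.natAdd (p + q) j)
      = Sum.elim (fun b => Sum.inl (Fin.natAdd p b)) (fun a => Sum.inr (Fin.castAdd q a))
          (cEquiv2 p q j) := by
  simp only [bigEquiv, Equiv.trans_apply, finSumFinEquiv_symm_apply_natAdd,
    Equiv.sumCongr_apply, Sum.map_inr]
  rcases h : cEquiv2 p q j with b | a <;> rfl

lemma charpoly_submatrix_equiv {α β : Type*} [Fintype α] [DecidableEq α] [Fintype β]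
    [DecidableEq β] (M : Matrix α α ℂ) (e : β ≃ α) :
    (M.submatrix ⇑e ⇑e).charpoly = M.charpoly := by
  rw [show M.submatrix ⇑e ⇑e = (Matrix.reindex e.symm e.symm) M from by
    rw [Matrix.reindex_apply, Equiv.symm_symm], Matrix.charpoly_reindex]

lemma block1_eq (p q : ℕ) (X : Matrix (Fin (p + q)) (Fin (p + q)) ℂ) :
    ((Matrix.fromBlocks 0 X Xᴴ 0).submatrix ⇑(bigEquiv p q) ⇑(bigEquiv p q)).submatrix
        (Fin.castAdd (p + q)) (Fin.castAdd (p + q))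
      = (Matrix.fromBlocks (0 : Matrix (Fin p) (Fin p) ℂ) (blockTR p q X) (blockTR p q X)ᴴ
          (0 : Matrix (Fin q) (Fin q) ℂ)).submatrix
          ⇑(finSumFinEquiv.symm) ⇑(finSumFinEquiv.symm) := by
  ext i j
  simp only [Matrix.submatrix_apply]
  rw [bigEquiv_apply_castAdd, bigEquiv_apply_castAdd]
  rcases finSumFinEquiv.symm i with a | b <;> rcases finSumFinEquiv.symm j with a' | b' <;>
    simp [blockTR, Matrix.fromBlocks_apply₁₁, Matrix.fromBlocks_apply₁₂,
      Matrix.fromBlocks_apply₂₁, Matrix.fromBlocks_apply₂₂, Matrix.conjTranspose_apply,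
      Matrix.submatrix_apply]

lemma block2_eq (p q : ℕ) (X : Matrix (Fin (p + q)) (Fin (p + q)) ℂ) :
    ((Matrix.fromBlocks 0 X Xᴴ 0).submatrix ⇑(bigEquiv p q) ⇑(bigEquiv p q)).submatrix
        (Fin.natAdd (p + q)) (Fin.natAdd (p + q))
      = (Matrix.fromBlocks (0 : Matrix (Fin q) (Fin q) ℂ) (blockBL p q X) (blockBL p q X)ᴴ
          (0 : Matrix (Fin p) (Fin p) ℂ)).submatrix
          ⇑(cEquiv2 p q) ⇑(cEquiv2 p q) := by
  ext i j
  simp only [Matrix.submatrix_apply]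
  rw [bigEquiv_apply_natAdd, bigEquiv_apply_natAdd]
  rcases cEquiv2 p q i with b | a <;> rcases cEquiv2 p q j with b' | a' <;>
    simp [blockBL, Matrix.fromBlocks_apply₁₁, Matrix.fromBlocks_apply₁₂,
      Matrix.fromBlocks_apply₂₁, Matrix.fromBlocks_apply₂₂, Matrix.conjTranspose_apply,
      Matrix.submatrix_apply]

theorem stmt_6 (p q : ℕ) (hq : 1 ≤ q) (hpq : q ≤ p)
    (X : Matrix (Fin (p + q)) (Fin (p + q)) ℂ) :
    (hatPQ (p + q) (p + q) (fun i => sval X (i : ℕ)),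
      hatPQ p q (fun i => sval (blockTR p q X) (i : ℕ)),
      hatPQ p q (fun i => sval (blockBL p q X) (i : ℕ))) ∈ LRcone (p + q) (p + q) := by
  have hH : (Matrix.fromBlocks (0 : Matrix (Fin (p + q)) (Fin (p + q)) ℂ) X Xᴴ
      (0 : Matrix (Fin (p + q)) (Fin (p + q)) ℂ)).IsHermitian := by
    show _ᴴ = _
    rw [Matrix.fromBlocks_conjTranspose, Matrix.conjTranspose_zero,
      Matrix.conjTranspose_conjTranspose]
  refine ⟨(Matrix.fromBlocks 0 X Xᴴ 0).submatrix ⇑(bigEquiv p q) ⇑(bigEquiv p q),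
    hH.submatrix ⇑(bigEquiv p q), ?_, ?_, ?_⟩
  · symm
    apply eigVec_eq_of_charpoly _
      (antitone_hatPQ le_rfl (antitone_svalFin le_rfl X) (fun _ => sval_nonneg X _))
    rw [charpoly_submatrix_equiv _ (bigEquiv p q)]
    exact charpoly_hat_eq le_rfl X
  · symm
    apply eigVec_eq_of_charpoly _
      (antitone_hatPQ hpq (antitone_svalFin hpq (blockTR p q X)) (fun _ => sval_nonneg _ _))
    rw [block1_eq p q X, charpoly_submatrix_equiv _ (finSumFinEquiv.symm)]
    exact charpoly_hat_eq' hpq (blockTR p q X)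
  · symm
    apply eigVec_eq_of_charpoly _
      (antitone_hatPQ hpq (antitone_svalFin le_rfl (blockBL p q X)) (fun _ => sval_nonneg _ _))
    rw [block2_eq p q X, charpoly_submatrix_equiv _ (cEquiv2 p q)]
    exact charpoly_hat_eq hpq (blockBL p q X)
end

section
/- An element (γ, s, t) with γ = (γ₁ ≥ γ₂ ≥ 0) ∈ ℝ² and s, t ∈ ℝ, s ≥ 0, t ≥ 0, belongs to S(1,1) if and only if γ₁ − γ₂ ≥ |s − t| and γ₁ + γ₂ ≥ s + t. -/
open Matrix

open scoped ComplexOrder in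
lemma aux_trace_eq_sum_eig {n : Type*} [Fintype n] [DecidableEq n] {A : Matrix n n ℂ}
    (hA : A.IsHermitian) : A.trace = ∑ i, (hA.eigenvalues i : ℂ) := by
  nth_rewrite 1 [hA.spectral_theorem]
  rw [Unitary.conjStarAlgAut_apply, Matrix.trace_mul_cycle, Unitary.coe_star_mul_self, Matrix.one_mul, Matrix.trace_diagonal]
  simp [Function.comp]

lemma aux_eigVec_le {A : Matrix (Fin 2) (Fin 2) ℂ} (hA : A.IsHermitian) :
    eigVec A hA 1 ≤ eigVec A hA 0 := by
  have h := Tuple.monotone_sort hA.eigenvalues (show ((0:Fin 2)) ≤ 1 by decide)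
  simpa [eigVec, show (0:Fin 2).rev = 1 by decide, show (1:Fin 2).rev = 0 by decide] using h

lemma aux_eigVec_sum {A : Matrix (Fin 2) (Fin 2) ℂ} (hA : A.IsHermitian) :
    eigVec A hA 0 + eigVec A hA 1 = hA.eigenvalues 0 + hA.eigenvalues 1 := by
  have h := Equiv.sum_comp (Tuple.sort hA.eigenvalues) hA.eigenvalues
  simp only [Fin.sum_univ_two] at h
  simp only [eigVec, show (0:Fin 2).rev = 1 by decide, show (1:Fin 2).rev = 0 by decide]
  linarith

lemma aux_eigVec_prod {A : Matrix (Fin 2) (Fin 2) ℂ} (hA : A.IsHermitian) :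
    eigVec A hA 0 * eigVec A hA 1 = hA.eigenvalues 0 * hA.eigenvalues 1 := by
  have h := Equiv.prod_comp (Tuple.sort hA.eigenvalues) hA.eigenvalues
  simp only [Fin.prod_univ_two] at h
  simp only [eigVec, show (0:Fin 2).rev = 1 by decide, show (1:Fin 2).rev = 0 by decide]
  rw [mul_comm]; exact h

lemma aux_sval_one (Y : Matrix (Fin 1) (Fin 1) ℂ) : sval Y 0 = ‖Y 0 0‖ := by
  have hH := Matrix.isHermitian_mul_conjTranspose_self Y
  have htr := aux_trace_eq_sum_eig hH
  simp only [Matrix.trace, Matrix.diag, Matrix.mul_apply, Matrix.conjTranspose_apply,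
    Fin.sum_univ_one, Complex.star_def, Complex.mul_conj] at htr
  have h0 : hH.eigenvalues 0 = Complex.normSq (Y 0 0) := by
    exact_mod_cast htr.symm
  have he : eigVec (Y * Yᴴ) hH 0 = hH.eigenvalues 0 := by
    simp only [eigVec]
    congr 1
    exact Subsingleton.elim _ _
  rw [show sval Y 0 = Real.sqrt (eigVec (Y * Yᴴ) hH 0) from dif_pos (by norm_num), he, h0,
    Complex.norm_def]

open scoped ComplexOrder in
lemma aux_sval_two_spec (Y : Matrix (Fin 2) (Fin 2) ℂ) :
    0 ≤ sval Y 1 ∧ sval Y 1 ≤ sval Y 0 ∧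
    sval Y 0 ^ 2 + sval Y 1 ^ 2 =
      Complex.normSq (Y 0 0) + Complex.normSq (Y 0 1) +
        Complex.normSq (Y 1 0) + Complex.normSq (Y 1 1) ∧
    sval Y 0 * sval Y 1 = ‖Y.det‖ := by
  have hH := Matrix.isHermitian_mul_conjTranspose_self Y
  have hpsd : (Y * Yᴴ).PosSemidef := Matrix.posSemidef_self_mul_conjTranspose Y
  have hnn : ∀ i, 0 ≤ hH.eigenvalues i := fun i => hpsd.eigenvalues_nonneg i
  have he0 : sval Y 0 = Real.sqrt (eigVec (Y * Yᴴ) hH 0) := dif_pos (by norm_num)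
  have he1 : sval Y 1 = Real.sqrt (eigVec (Y * Yᴴ) hH 1) := dif_pos (by norm_num)
  have hv0 : 0 ≤ eigVec (Y * Yᴴ) hH 0 := hnn _
  have hv1 : 0 ≤ eigVec (Y * Yᴴ) hH 1 := hnn _
  have htr := aux_trace_eq_sum_eig hH
  simp only [Matrix.trace, Matrix.diag, Matrix.mul_apply, Matrix.conjTranspose_apply,
    Fin.sum_univ_two, Complex.star_def, Complex.mul_conj] at htr
  have hsum : hH.eigenvalues 0 + hH.eigenvalues 1 =
      Complex.normSq (Y 0 0) + Complex.normSq (Y 0 1) +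
        Complex.normSq (Y 1 0) + Complex.normSq (Y 1 1) := by
    have : ((hH.eigenvalues 0 + hH.eigenvalues 1 : ℝ) : ℂ) =
        ((Complex.normSq (Y 0 0) + Complex.normSq (Y 0 1) +
          Complex.normSq (Y 1 0) + Complex.normSq (Y 1 1) : ℝ) : ℂ) := by
      push_cast
      rw [← htr]; ring
    exact_mod_cast this
  have hdet : hH.eigenvalues 0 * hH.eigenvalues 1 = Complex.normSq Y.det := by
    have h1 : (Y * Yᴴ).det = ((Complex.normSq Y.det : ℝ) : ℂ) := by
      rw [Matrix.det_mul, Matrix.det_conjTranspose, Complex.star_def, Complex.mul_conj]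
    have h2 := hH.det_eq_prod_eigenvalues
    rw [Fin.prod_univ_two] at h2
    rw [h2] at h1
    rw [← RCLike.ofReal_mul] at h1
    exact RCLike.ofReal_inj.mp h1
  refine ⟨by rw [he1]; exact Real.sqrt_nonneg _,
    by rw [he0, he1]; exact Real.sqrt_le_sqrt (aux_eigVec_le hH), ?_, ?_⟩
  · rw [he0, he1, Real.sq_sqrt hv0, Real.sq_sqrt hv1, aux_eigVec_sum hH, hsum]
  · rw [he0, he1, ← Real.sqrt_mul hv0, aux_eigVec_prod hH, hdet, Complex.norm_def]

lemma aux_le_of_sq_le {x y : ℝ} (hx : 0 ≤ x) (hy : 0 ≤ y) (h : x ^ 2 ≤ y ^ 2) : x ≤ y := by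
  nlinarith

lemma aux_pair_unique {x0 x1 y0 y1 : ℝ} (hx1 : 0 ≤ x1) (hx : x1 ≤ x0) (hy1 : 0 ≤ y1)
    (hy : y1 ≤ y0) (hsum : x0 ^ 2 + x1 ^ 2 = y0 ^ 2 + y1 ^ 2) (hprod : x0 * x1 = y0 * y1) :
    x0 = y0 ∧ x1 = y1 := by
  have hs : x0 + x1 = y0 + y1 := by
    have h1 : (x0 + x1) ^ 2 = (y0 + y1) ^ 2 := by nlinarith
    have := aux_le_of_sq_le (by linarith) (by linarith) h1.le
    have := aux_le_of_sq_le (by linarith) (by linarith) h1.ge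
    linarith
  have hd : x0 - x1 = y0 - y1 := by
    have h1 : (x0 - x1) ^ 2 = (y0 - y1) ^ 2 := by nlinarith
    have := aux_le_of_sq_le (by linarith) (by linarith) h1.le
    have := aux_le_of_sq_le (by linarith) (by linarith) h1.ge
    linarith
  constructor <;> linarith

lemma aux_two (a b s : ℝ) (c : ℂ) :
    0 ≤ sval !![(a : ℂ), (s : ℂ); c, (b : ℂ)] 1 ∧
    sval !![(a : ℂ), (s : ℂ); c, (b : ℂ)] 1 ≤ sval !![(a : ℂ), (s : ℂ); c, (b : ℂ)] 0 ∧
    sval !![(a : ℂ), (s : ℂ); c, (b : ℂ)] 0 ^ 2 + sval !![(a : ℂ), (s : ℂ); c, (b : ℂ)] 1 ^ 2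
      = a ^ 2 + s ^ 2 + ‖c‖ ^ 2 + b ^ 2 ∧
    sval !![(a : ℂ), (s : ℂ); c, (b : ℂ)] 0 * sval !![(a : ℂ), (s : ℂ); c, (b : ℂ)] 1
      = ‖(a : ℂ) * (b : ℂ) - (s : ℂ) * c‖ := by
  obtain ⟨k1, k2, k3, k4⟩ := aux_sval_two_spec !![(a : ℂ), (s : ℂ); c, (b : ℂ)]
  refine ⟨k1, k2, ?_, ?_⟩
  · rw [k3]
    simp only [Matrix.of_apply, Matrix.cons_val', Matrix.cons_val_zero, Matrix.cons_val_one,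
      Matrix.head_cons, Matrix.empty_val', Matrix.cons_val_fin_one, Matrix.head_fin_const,
      Complex.normSq_ofReal, ← Complex.sq_norm]
    simp only [Complex.norm_real, Real.norm_eq_abs, sq_abs]
  · rw [k4, Matrix.det_fin_two]
    simp only [Matrix.of_apply, Matrix.cons_val', Matrix.cons_val_zero, Matrix.cons_val_one,
      Matrix.head_cons, Matrix.empty_val', Matrix.cons_val_fin_one, Matrix.head_fin_const]

lemma aux_e01 (a b s : ℝ) (c : ℂ) : (!![(a : ℂ), (s : ℂ); c, (b : ℂ)]) 0 1 = (s : ℂ) := by simp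
lemma aux_e10 (a b s : ℝ) (c : ℂ) : (!![(a : ℂ), (s : ℂ); c, (b : ℂ)]) 1 0 = c := by simp

set_option maxHeartbeats 1000000 in
theorem stmt_9 (g : Fin (1 + 1) → ℝ) (s t : ℝ)
    (hg : g 0 ≥ g 1) (hg0 : g 1 ≥ 0) (hs : s ≥ 0) (ht : t ≥ 0) :
    (g, fun _ : Fin 1 => s, fun _ : Fin 1 => t) ∈ coneS 1 1 ↔
      (g 0 - g 1 ≥ |s - t| ∧ g 0 + g 1 ≥ s + t) := by
  constructor
  · rintro ⟨X, hA, hB, hC⟩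
    have hg0e : g 0 = sval X 0 := hA 0
    have hg1e : g 1 = sval X 1 := hA 1
    have hsX : s = ‖X (0 : Fin 2) (1 : Fin 2)‖ := by
      have h : s = sval (blockTR 1 1 X) 0 := hB 0
      rw [aux_sval_one] at h
      exact h
    have htX : t = ‖X (1 : Fin 2) (0 : Fin 2)‖ := by
      have h : t = sval (blockBL 1 1 X) 0 := hC 0
      rw [aux_sval_one] at h
      exact h
    obtain ⟨k1, k2, k3, k4⟩ := aux_sval_two_spec X
    rw [← Complex.sq_norm, ← Complex.sq_norm, ← Complex.sq_norm, ← Complex.sq_norm] at k3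
    set a := ‖X (0 : Fin 2) (0 : Fin 2)‖ with ha
    set b := ‖X (1 : Fin 2) (1 : Fin 2)‖ with hb
    have ha0 : 0 ≤ a := norm_nonneg _
    have hb0 : 0 ≤ b := norm_nonneg _
    have hdet2 := Matrix.det_fin_two X
    have hd1 : ‖X.det‖ ≤ a * b + s * t := by
      rw [hdet2, hsX, htX, ha, hb,
        ← norm_mul, ← norm_mul]
      exact norm_sub_le _ _
    have hd2 : s * t ≤ a * b + ‖X.det‖ := by
      have e : X (0 : Fin 2) (1 : Fin 2) * X (1 : Fin 2) (0 : Fin 2)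
          = X (0 : Fin 2) (0 : Fin 2) * X (1 : Fin 2) (1 : Fin 2) - X.det := by
        rw [hdet2]; ring
      have h3 : s * t = ‖X (0 : Fin 2) (1 : Fin 2) * X (1 : Fin 2) (0 : Fin 2)‖ := by
        rw [hsX, htX]
        exact (norm_mul _ _).symm
      rw [h3, e, ha, hb,
        ← norm_mul]
      have h4 := norm_sub_le (X (0 : Fin 2) (0 : Fin 2) * X (1 : Fin 2) (1 : Fin 2)) X.det
      linarith
    have key1 : (s - t) ^ 2 ≤ (sval X 0 - sval X 1) ^ 2 := by
      nlinarith [sq_nonneg (a - b)]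
    have key2 : (s + t) ^ 2 ≤ (sval X 0 + sval X 1) ^ 2 := by
      nlinarith [sq_nonneg (a - b)]
    constructor
    · rw [hg0e, hg1e]
      have := aux_le_of_sq_le (x := |s - t|) (y := sval X 0 - sval X 1)
        (abs_nonneg (s - t)) (by linarith) (by rw [sq_abs]; exact key1)
      linarith
    · rw [hg0e, hg1e]
      exact aux_le_of_sq_le (by linarith) (by linarith) key2
  · rintro ⟨h1, h2⟩
    have hg00 : 0 ≤ g 0 := le_trans hg0 hg
    have habs2 : (s - t) ^ 2 ≤ (g 0 - g 1) ^ 2 := by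
      rw [← sq_abs (s - t)]
      exact pow_le_pow_left₀ (abs_nonneg _) h1 2
    have hsum2 : (s + t) ^ 2 ≤ (g 0 + g 1) ^ 2 := pow_le_pow_left₀ (by linarith) h2 2
    obtain ⟨u, hu0, hu2⟩ : ∃ u : ℝ, 0 ≤ u ∧ u ^ 2 = (g 0 + g 1) ^ 2 - (s + t) ^ 2 :=
      ⟨Real.sqrt _, Real.sqrt_nonneg _, Real.sq_sqrt (by linarith)⟩
    obtain ⟨v, hv0, hv2⟩ : ∃ v : ℝ, 0 ≤ v ∧ v ^ 2 = (g 0 - g 1) ^ 2 - (s - t) ^ 2 :=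
      ⟨Real.sqrt _, Real.sqrt_nonneg _, Real.sq_sqrt (by linarith)⟩
    by_cases hc : s * t ≤ g 0 * g 1
    · have hvu : v ≤ u := aux_le_of_sq_le hv0 hu0 (by nlinarith)
      obtain ⟨a, b, ha0, hb0, hab, hsq⟩ : ∃ a b : ℝ, 0 ≤ a ∧ 0 ≤ b ∧
          a * b + s * t = g 0 * g 1 ∧ a ^ 2 + b ^ 2 = g 0 ^ 2 + g 1 ^ 2 - s ^ 2 - t ^ 2 :=
        ⟨(u + v) / 2, (u - v) / 2, by linarith, by linarith, by nlinarith, by nlinarith⟩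
      obtain ⟨k1, k2, k3, k4⟩ := aux_two a b s (((-t : ℝ)) : ℂ)
      rw [show ‖((-t : ℝ) : ℂ)‖ = t by
        rw [Complex.norm_real, Real.norm_eq_abs, abs_neg, abs_of_nonneg ht]] at k3
      rw [show ((a : ℂ) * (b : ℂ) - (s : ℂ) * ((-t : ℝ) : ℂ)) = ((a * b + s * t : ℝ) : ℂ) by
        push_cast; ring, Complex.norm_real, Real.norm_eq_abs,
        abs_of_nonneg (add_nonneg (mul_nonneg ha0 hb0) (mul_nonneg hs ht)), hab] at k4
      obtain ⟨E0, E1⟩ := aux_pair_unique k1 k2 hg0 hg (by linarith) k4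
      refine ⟨!![(a : ℂ), (s : ℂ); ((-t : ℝ) : ℂ), (b : ℂ)], ?_, ?_, ?_⟩
      · intro i
        fin_cases i
        · exact E0.symm
        · exact E1.symm
      · intro i
        show s = sval (blockTR 1 1 !![(a : ℂ), (s : ℂ); ((-t : ℝ) : ℂ), (b : ℂ)]) (i : ℕ)
        rw [show ((i : ℕ)) = 0 from by omega, aux_sval_one,
          show blockTR 1 1 !![(a : ℂ), (s : ℂ); ((-t : ℝ) : ℂ), (b : ℂ)] 0 0
            = !![(a : ℂ), (s : ℂ); ((-t : ℝ) : ℂ), (b : ℂ)] 0 1 from rfl,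
          aux_e01, Complex.norm_real, Real.norm_eq_abs, abs_of_nonneg hs]
      · intro i
        show t = sval (blockBL 1 1 !![(a : ℂ), (s : ℂ); ((-t : ℝ) : ℂ), (b : ℂ)]) (i : ℕ)
        rw [show ((i : ℕ)) = 0 from by omega, aux_sval_one,
          show blockBL 1 1 !![(a : ℂ), (s : ℂ); ((-t : ℝ) : ℂ), (b : ℂ)] 0 0
            = !![(a : ℂ), (s : ℂ); ((-t : ℝ) : ℂ), (b : ℂ)] 1 0 from rfl,
          aux_e10, Complex.norm_real, Real.norm_eq_abs, abs_neg, abs_of_nonneg ht]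
    · push_neg at hc
      have hvu : u ≤ v := aux_le_of_sq_le hu0 hv0 (by nlinarith)
      obtain ⟨a, b, ha0, hb0, hab, hsq⟩ : ∃ a b : ℝ, 0 ≤ a ∧ 0 ≤ b ∧
          a * b - s * t = -(g 0 * g 1) ∧ a ^ 2 + b ^ 2 = g 0 ^ 2 + g 1 ^ 2 - s ^ 2 - t ^ 2 :=
        ⟨(v + u) / 2, (v - u) / 2, by linarith, by linarith, by nlinarith, by nlinarith⟩
      obtain ⟨k1, k2, k3, k4⟩ := aux_two a b s ((t : ℝ) : ℂ)
      rw [show ‖((t : ℝ) : ℂ)‖ = t by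
        rw [Complex.norm_real, Real.norm_eq_abs, abs_of_nonneg ht]] at k3
      rw [show ((a : ℂ) * (b : ℂ) - (s : ℂ) * ((t : ℝ) : ℂ)) = ((a * b - s * t : ℝ) : ℂ) by
        push_cast; ring, Complex.norm_real, Real.norm_eq_abs, hab, abs_neg,
        abs_of_nonneg (mul_nonneg hg00 hg0)] at k4
      obtain ⟨E0, E1⟩ := aux_pair_unique k1 k2 hg0 hg (by linarith) k4
      refine ⟨!![(a : ℂ), (s : ℂ); ((t : ℝ) : ℂ), (b : ℂ)], ?_, ?_, ?_⟩
      · intro i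
        fin_cases i
        · exact E0.symm
        · exact E1.symm
      · intro i
        show s = sval (blockTR 1 1 !![(a : ℂ), (s : ℂ); ((t : ℝ) : ℂ), (b : ℂ)]) (i : ℕ)
        rw [show ((i : ℕ)) = 0 from by omega, aux_sval_one,
          show blockTR 1 1 !![(a : ℂ), (s : ℂ); ((t : ℝ) : ℂ), (b : ℂ)] 0 0
            = !![(a : ℂ), (s : ℂ); ((t : ℝ) : ℂ), (b : ℂ)] 0 1 from rfl,
          aux_e01, Complex.norm_real, Real.norm_eq_abs, abs_of_nonneg hs]
      · intro i
        show t = sval (blockBL 1 1 !![(a : ℂ), (s : ℂ); ((t : ℝ) : ℂ), (b : ℂ)]) (i : ℕ)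
        rw [show ((i : ℕ)) = 0 from by omega, aux_sval_one,
          show blockBL 1 1 !![(a : ℂ), (s : ℂ); ((t : ℝ) : ℂ), (b : ℂ)] 0 0
            = !![(a : ℂ), (s : ℂ); ((t : ℝ) : ℂ), (b : ℂ)] 1 0 from rfl,
          aux_e10, Complex.norm_real, Real.norm_eq_abs, abs_of_nonneg ht]
end

section
/- Let p ≥ q ≥ 1 and n = p + q. For every n×n complex matrix X written in blocks with X₁₁ the top-left p×p block and X₂₂ the bottom-right q×q block, one has (ŝ(X), ŝ(X₁₁), ŝ(X₂₂)) ∈ LR(2p, 2q), where ŝ(X) ∈ ℝ^{2n}, ŝ(X₁₁) ∈ ℝ^{2p}, ŝ(X₂₂) ∈ ℝ^{2q} are the hats of the corresponding singular value vectors. -/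
open Matrix

/-! ### Auxiliary lemmas -/

open Polynomial Finset in
/-- Conjugation invariance of `det (x • 1 - A.map C)`. -/
lemma aux_det_conj {m : Type*} [Fintype m] [DecidableEq m]
    (x : ℂ[X]) (A U V : Matrix m m ℂ) (hUV : U * V = 1) :
    (x • (1 : Matrix m m ℂ[X]) - (U * A * V).map (C : ℂ → ℂ[X])).det
      = (x • (1 : Matrix m m ℂ[X]) - A.map (C : ℂ → ℂ[X])).det := by
  have hmap : ∀ (P Q : Matrix m m ℂ),
      (P * Q).map (C : ℂ → ℂ[X]) = P.map (C : ℂ → ℂ[X]) * Q.map (C : ℂ → ℂ[X]) := by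
    intro P Q
    exact Matrix.map_mul (f := (C : ℂ →+* ℂ[X]))
  have h1 : U.map (C : ℂ → ℂ[X]) * V.map (C : ℂ → ℂ[X]) = 1 := by
    rw [← hmap, hUV, Matrix.map_one _ (map_zero _) (map_one _)]
  have key : x • (1 : Matrix m m ℂ[X]) - (U * A * V).map (C : ℂ → ℂ[X])
      = U.map (C : ℂ → ℂ[X]) * (x • (1 : Matrix m m ℂ[X]) - A.map (C : ℂ → ℂ[X]))
          * V.map (C : ℂ → ℂ[X]) := by
    rw [hmap, hmap, Matrix.mul_sub, Matrix.sub_mul, Matrix.mul_smul, Matrix.mul_one,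
      Matrix.smul_mul, h1]
  rw [key, Matrix.det_mul, Matrix.det_mul, mul_comm, ← mul_assoc, ← Matrix.det_mul,
    mul_eq_one_comm.mp h1, Matrix.det_one, one_mul]

open Polynomial Finset in
lemma aux_det_hermitian {m : Type*} [Fintype m] [DecidableEq m]
    (x : ℂ[X]) {A : Matrix m m ℂ} (hA : A.IsHermitian) :
    (x • (1 : Matrix m m ℂ[X]) - A.map (C : ℂ → ℂ[X])).det
      = ∏ i, (x - C ((hA.eigenvalues i : ℝ) : ℂ)) := by
  have hU : (hA.eigenvectorUnitary : Matrix m m ℂ)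
      * (star hA.eigenvectorUnitary : Matrix m m ℂ) = 1 :=
    (Matrix.mem_unitaryGroup_iff).mp hA.eigenvectorUnitary.2
  conv_lhs => rw [hA.spectral_theorem, Unitary.conjStarAlgAut_apply]
  rw [aux_det_conj x _ _ _ hU]
  have hdiag : x • (1 : Matrix m m ℂ[X])
      - (Matrix.diagonal (RCLike.ofReal ∘ hA.eigenvalues)).map (C : ℂ → ℂ[X])
      = Matrix.diagonal (fun i => x - C ((hA.eigenvalues i : ℝ) : ℂ)) := by
    ext i j
    rcases eq_or_ne i j with rfl | h
    · simp [Matrix.smul_apply, Matrix.one_apply_eq, Matrix.map_apply]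
    · simp [Matrix.smul_apply, Matrix.one_apply_ne h, Matrix.map_apply,
        Matrix.diagonal_apply_ne _ h]
  rw [hdiag, Matrix.det_diagonal]

open Polynomial in
lemma aux_charmatrix_eq (m : Type*) [Fintype m] [DecidableEq m] (A : Matrix m m ℂ) :
    Matrix.charmatrix A = (X : ℂ[X]) • (1 : Matrix m m ℂ[X]) - A.map (C : ℂ → ℂ[X]) := by
  ext i j
  rcases eq_or_ne i j with rfl | h
  · simp [Matrix.charmatrix_apply, Matrix.smul_apply, Matrix.one_apply_eq, Matrix.map_apply]
  · simp [Matrix.charmatrix_apply, Matrix.smul_apply, Matrix.one_apply_ne h,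
      Matrix.map_apply, Matrix.diagonal_apply_ne _ h]

open Polynomial Finset in
/-- Characteristic polynomial of a Hermitian matrix. -/
lemma aux_charpoly_hermitian {m : Type*} [Fintype m] [DecidableEq m]
    {A : Matrix m m ℂ} (hA : A.IsHermitian) :
    A.charpoly = ∏ i, ((X : ℂ[X]) - C ((hA.eigenvalues i : ℝ) : ℂ)) := by
  rw [Matrix.charpoly, aux_charmatrix_eq, aux_det_hermitian X hA]

open Polynomial Finset in
/-- Characteristic polynomial of `[[0, Y], [Yᴴ, 0]]`. -/
lemma aux_charpoly_blocks {m : Type*} [Fintype m] [DecidableEq m] (Y : Matrix m m ℂ) :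
    (Matrix.fromBlocks 0 Y Yᴴ 0).charpoly
      = ∏ i, ((X : ℂ[X]) ^ 2
          - C (((Matrix.isHermitian_mul_conjTranspose_self Y).eigenvalues i : ℝ) : ℂ)) := by
  set R := (ℂ[X])
  set B : Matrix m m ℂ[X] := -(Y.map (C : ℂ → ℂ[X])) with hB
  set Cm : Matrix m m ℂ[X] := -(Yᴴ.map (C : ℂ → ℂ[X])) with hCm
  have hchar : Matrix.charmatrix (Matrix.fromBlocks 0 Y Yᴴ 0)
      = Matrix.fromBlocks ((X : ℂ[X]) • 1) B Cm ((X : ℂ[X]) • 1) := by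
    have h0 : Matrix.charmatrix (0 : Matrix m m ℂ) = (X : ℂ[X]) • 1 := by
      rw [aux_charmatrix_eq]
      simp
    rw [Matrix.charmatrix_fromBlocks, h0]
  have c := Fintype.card m
  -- the multiplication trick
  have hmul : (Matrix.fromBlocks ((X : ℂ[X]) • 1) (-B) 0 ((X : ℂ[X]) • 1))
      * (Matrix.fromBlocks ((X : ℂ[X]) • 1) B Cm ((X : ℂ[X]) • 1))
      = Matrix.fromBlocks (((X : ℂ[X]) ^ 2) • 1 - B * Cm) 0 ((X : ℂ[X]) • Cm)
          (((X : ℂ[X]) ^ 2) • 1) := by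
    rw [Matrix.fromBlocks_multiply]
    have h11 : ((X : ℂ[X]) • 1) * ((X : ℂ[X]) • (1 : Matrix m m ℂ[X])) + (-B) * Cm
        = ((X : ℂ[X]) ^ 2) • 1 - B * Cm := by
      rw [Matrix.smul_mul, Matrix.mul_smul, Matrix.one_mul, smul_smul, ← pow_two,
        Matrix.neg_mul, ← sub_eq_add_neg]
    have h12 : ((X : ℂ[X]) • (1 : Matrix m m ℂ[X])) * B + (-B) * ((X : ℂ[X]) • 1)
        = 0 := by
      rw [Matrix.smul_mul, Matrix.one_mul, Matrix.neg_mul, Matrix.mul_smul, Matrix.mul_one]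
      simp
    have h21 : (0 : Matrix m m ℂ[X]) * ((X : ℂ[X]) • 1) + ((X : ℂ[X]) • 1) * Cm
        = (X : ℂ[X]) • Cm := by
      rw [Matrix.zero_mul, Matrix.smul_mul, Matrix.one_mul, zero_add]
    have h22 : (0 : Matrix m m ℂ[X]) * B + ((X : ℂ[X]) • 1) * ((X : ℂ[X]) • 1)
        = ((X : ℂ[X]) ^ 2) • 1 := by
      rw [Matrix.zero_mul, Matrix.smul_mul, Matrix.mul_smul, Matrix.one_mul, smul_smul,
        ← pow_two, zero_add]
    rw [h11, h12, h21, h22]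
  have hdetT : (Matrix.fromBlocks ((X : ℂ[X]) • 1) (-B) 0 ((X : ℂ[X]) • 1)).det
      = (X : ℂ[X]) ^ Fintype.card m * (X : ℂ[X]) ^ Fintype.card m := by
    rw [Matrix.det_fromBlocks_zero₂₁, Matrix.det_smul, Matrix.det_one, mul_one]
  have hdetR : (Matrix.fromBlocks (((X : ℂ[X]) ^ 2) • 1 - B * Cm) 0 ((X : ℂ[X]) • Cm)
      (((X : ℂ[X]) ^ 2) • 1)).det
      = (((X : ℂ[X]) ^ 2) • 1 - B * Cm).det
          * ((X : ℂ[X]) ^ Fintype.card m * (X : ℂ[X]) ^ Fintype.card m) := by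
    rw [Matrix.det_fromBlocks_zero₁₂, Matrix.det_smul, Matrix.det_one, mul_one, ← pow_mul,
      two_mul, pow_add]
  have hXne : (X : ℂ[X]) ^ Fintype.card m * (X : ℂ[X]) ^ Fintype.card m ≠ 0 :=
    mul_ne_zero (pow_ne_zero _ Polynomial.X_ne_zero) (pow_ne_zero _ Polynomial.X_ne_zero)
  have hdet : (Matrix.fromBlocks ((X : ℂ[X]) • 1) B Cm ((X : ℂ[X]) • 1)).det
      = (((X : ℂ[X]) ^ 2) • 1 - B * Cm).det := by
    have h0 := congrArg Matrix.det hmul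
    rw [Matrix.det_mul, hdetT, hdetR] at h0
    exact mul_left_cancel₀ hXne (h0.trans (mul_comm _ _))
  have hBC : B * Cm = (Y * Yᴴ).map (C : ℂ → ℂ[X]) := by
    rw [hB, hCm, Matrix.neg_mul, Matrix.mul_neg, neg_neg,
      ← Matrix.map_mul (f := (C : ℂ →+* ℂ[X]))]
  rw [Matrix.charpoly, hchar, hdet, hBC,
    aux_det_hermitian ((X : ℂ[X]) ^ 2) (Matrix.isHermitian_mul_conjTranspose_self Y)]

open Finset in
lemma aux_multiset_comp_equiv {m : ℕ} {α : Type*} (u : Fin m → α) (e : Equiv.Perm (Fin m)) :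
    Finset.univ.val.map (fun i => u (e i)) = Finset.univ.val.map u := by
  have h := congrArg Finset.val (Finset.map_univ_equiv e)
  rw [Finset.map_val] at h
  conv_rhs => rw [← h]
  rw [Multiset.map_map]
  rfl

open Finset in
lemma aux_antitone_eq {m : ℕ} {f g : Fin m → ℝ}
    (hf : Antitone f) (hg : Antitone g)
    (h : Finset.univ.val.map f = Finset.univ.val.map g) : f = g := by
  have hrev : ∀ u : Fin m → ℝ,
      Finset.univ.val.map (fun i : Fin m => u i.rev) = Finset.univ.val.map u := by
    intro u
    have := aux_multiset_comp_equiv u (Fin.revPerm : Equiv.Perm (Fin m))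
    simpa using this
  have hf' : Monotone (fun i : Fin m => f i.rev) := by
    intro i j hij
    exact hf (by rwa [Fin.rev_le_rev])
  have hg' : Monotone (fun i : Fin m => g i.rev) := by
    intro i j hij
    exact hg (by rwa [Fin.rev_le_rev])
  have hlist : List.ofFn (fun i : Fin m => f i.rev) = List.ofFn (fun i : Fin m => g i.rev) := by
    apply List.Perm.eq_of_sortedLE hf'.sortedLE_ofFn hg'.sortedLE_ofFn
    rw [← Multiset.coe_eq_coe, ← Fin.univ_val_map, ← Fin.univ_val_map, hrev f, hrev g, h]
  have hfg := List.ofFn_injective hlist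
  funext i
  have := congrFun hfg i.rev
  simpa [Fin.rev_rev] using this

open Polynomial Finset in
/-- Uniqueness: a Hermitian matrix whose charpoly is `∏ (X - v i)` with `v` antitone has
`eigVec` equal to `v`. -/
lemma aux_eigVec_eq {m : ℕ} {H : Matrix (Fin m) (Fin m) ℂ} (hH : H.IsHermitian)
    {v : Fin m → ℝ} (hv : Antitone v)
    (hchar : H.charpoly = ∏ i, ((X : ℂ[X]) - C ((v i : ℝ) : ℂ))) : eigVec H hH = v := by
  have h1 : H.charpoly = ∏ i, ((X : ℂ[X]) - C ((hH.eigenvalues i : ℝ) : ℂ)) :=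
    aux_charpoly_hermitian hH
  -- multiset equality over ℂ
  have h3 : (Multiset.map (fun i => ((hH.eigenvalues i : ℝ) : ℂ)) Finset.univ.val)
      = Multiset.map (fun i => ((v i : ℝ) : ℂ)) Finset.univ.val := by
    have e1 := Polynomial.roots_multiset_prod_X_sub_C
      (Multiset.map (fun i => ((hH.eigenvalues i : ℝ) : ℂ)) Finset.univ.val)
    have e2 := Polynomial.roots_multiset_prod_X_sub_C
      (Multiset.map (fun i => ((v i : ℝ) : ℂ)) Finset.univ.val)
    rw [Multiset.map_map] at e1 e2
    have hp : (Multiset.map ((fun a => X - C a) ∘ fun i => ((hH.eigenvalues i : ℝ) : ℂ))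
          Finset.univ.val).prod
        = (Multiset.map ((fun a => X - C a) ∘ fun i => ((v i : ℝ) : ℂ)) Finset.univ.val).prod := by
      rw [← Finset.prod_eq_multiset_prod, ← Finset.prod_eq_multiset_prod]
      simp only [Function.comp]
      rw [← h1, hchar]
    rw [← e1, ← e2, hp]
  have h4 : Finset.univ.val.map hH.eigenvalues = Finset.univ.val.map v := by
    apply Multiset.map_injective (f := (Complex.ofReal : ℝ → ℂ)) Complex.ofReal_injective
    rw [Multiset.map_map, Multiset.map_map]
    exact h3
  have hperm : Finset.univ.val.map (eigVec H hH) = Finset.univ.val.map hH.eigenvalues := by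
    have heq : eigVec H hH = fun i =>
        hH.eigenvalues (((Fin.revPerm : Equiv.Perm (Fin m)).trans
          (Tuple.sort hH.eigenvalues)) i) := by
      funext i
      rfl
    rw [heq]
    exact aux_multiset_comp_equiv hH.eigenvalues _
  have hanti : Antitone (eigVec H hH) := by
    intro i j hij
    exact Tuple.monotone_sort hH.eigenvalues (by rwa [Fin.rev_le_rev])
  exact aux_antitone_eq hanti hv (hperm.trans (h4.trans rfl))

open Polynomial Finset in
/-- Key lemma: if a Hermitian `H` of size `k + k` has the charpoly of `[[0,Y],[Yᴴ,0]]`,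
then its eigenvalue vector is the hat of the singular values of `Y`. -/
lemma aux_key {k m : ℕ} (hm : m = k + k) (Y : Matrix (Fin k) (Fin k) ℂ)
    (H : Matrix (Fin m) (Fin m) ℂ) (hH : H.IsHermitian)
    (hc : H.charpoly = ∏ i : Fin k, ((X : ℂ[X]) ^ 2
        - C (((Matrix.isHermitian_mul_conjTranspose_self Y).eigenvalues i : ℝ) : ℂ))) :
    eigVec H hH = hatPQ k k (fun i => sval Y (i : ℕ)) ∘ Fin.cast hm := by
  set W : Matrix (Fin k) (Fin k) ℂ := Y * Yᴴ with hWdef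
  have hW : W.IsHermitian := Matrix.isHermitian_mul_conjTranspose_self Y
  set s : Fin k → ℝ := fun i => sval Y (i : ℕ) with hsdef
  have hs_eq : ∀ i : Fin k, s i = Real.sqrt (eigVec W hW i) := by
    intro i
    have hik : (i : ℕ) < k := i.isLt
    simp only [hsdef, sval, dif_pos hik, Fin.eta]
    rfl
  have heigW : ∀ i : Fin k, eigVec W hW i
      = hW.eigenvalues (((Fin.revPerm : Equiv.Perm (Fin k)).trans (Tuple.sort hW.eigenvalues)) i) :=
    fun i => rfl
  have heigW_nonneg : ∀ i : Fin k, 0 ≤ eigVec W hW i := by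
    intro i
    rw [heigW]
    exact Matrix.eigenvalues_self_mul_conjTranspose_nonneg Y _
  have heigW_anti : Antitone (eigVec W hW) := by
    intro i j hij
    exact Tuple.monotone_sort hW.eigenvalues (by rwa [Fin.rev_le_rev])
  have hs_nonneg : ∀ i : Fin k, 0 ≤ s i := by
    intro i; rw [hs_eq]; exact Real.sqrt_nonneg _
  have hs_anti : Antitone s := by
    intro i j hij
    rw [hs_eq, hs_eq]
    exact Real.sqrt_le_sqrt (heigW_anti hij)
  set v : Fin m → ℝ := hatPQ k k s ∘ Fin.cast hm with hvdef
  have hv_lt : ∀ (j : Fin m) (h : (j : ℕ) < k), v j = s ⟨j, h⟩ := by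
    intro j h
    simp only [hvdef, Function.comp_apply, hatPQ, Fin.coe_cast, dif_pos h]
  have hv_ge : ∀ (j : Fin m) (h : ¬ (j : ℕ) < k), v j
      = -s ⟨k + k - 1 - (j : ℕ), by omega⟩ := by
    intro j h
    simp only [hvdef, Function.comp_apply, hatPQ, Fin.coe_cast, dif_neg h]
  have hvA : Antitone v := by
    intro a b hab
    have hab' : (a : ℕ) ≤ (b : ℕ) := hab
    by_cases ha : (a : ℕ) < k
    · by_cases hb : (b : ℕ) < k
      · rw [hv_lt a ha, hv_lt b hb]
        exact hs_anti (by simpa [Fin.mk_le_mk] using hab')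
      · rw [hv_lt a ha, hv_ge b hb]
        exact le_trans (neg_nonpos.mpr (hs_nonneg _)) (hs_nonneg _)
    · have hb : ¬ (b : ℕ) < k := by omega
      rw [hv_ge a ha, hv_ge b hb]
      apply neg_le_neg
      apply hs_anti
      simp only [Fin.mk_le_mk]
      omega
  -- charpoly in terms of v
  have hprod : H.charpoly = ∏ j : Fin m, ((X : ℂ[X]) - C ((v j : ℝ) : ℂ)) := by
    rw [hc]
    have e1 : ∏ j : Fin m, ((X : ℂ[X]) - C ((v j : ℝ) : ℂ))
        = ∏ j : Fin (k + k), ((X : ℂ[X]) - C ((hatPQ k k s j : ℝ) : ℂ)) := by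
      rw [← Equiv.prod_comp (finCongr hm)
        (fun j : Fin (k + k) => (X : ℂ[X]) - C ((hatPQ k k s j : ℝ) : ℂ))]
      apply Finset.prod_congr rfl
      intro j _
      rfl
    rw [e1, Fin.prod_univ_add]
    have e2 : ∀ i : Fin k, hatPQ k k s (Fin.castAdd k i) = s i := by
      intro i
      have hik : ((Fin.castAdd k i : Fin (k + k)) : ℕ) < k := i.isLt
      simp only [hatPQ, dif_pos hik]
      apply congrArg
      exact Fin.ext rfl
    have e3 : ∀ i : Fin k, hatPQ k k s (Fin.natAdd k i) = -s i.rev := by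
      intro i
      have hik : ¬ ((Fin.natAdd k i : Fin (k + k)) : ℕ) < k := by
        simp
      have hfin : (⟨k + k - 1 - ((Fin.natAdd k i : Fin (k + k)) : ℕ),
          by have := i.isLt; simp; omega⟩ : Fin k) = i.rev := by
        apply Fin.ext
        have := i.isLt
        simp [Fin.val_rev]
        omega
      simp only [hatPQ, dif_neg hik]
      rw [hfin]
    simp only [e2, e3]
    have e4 : ∏ i : Fin k, ((X : ℂ[X]) - C (((-s i.rev : ℝ)) : ℂ))
        = ∏ i : Fin k, ((X : ℂ[X]) + C ((s i : ℝ) : ℂ)) := by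
      rw [← Equiv.prod_comp (Fin.revPerm : Equiv.Perm (Fin k))
        (fun i : Fin k => (X : ℂ[X]) + C ((s i : ℝ) : ℂ))]
      apply Finset.prod_congr rfl
      intro i _
      push_cast
      simp [sub_neg_eq_add]
    rw [e4, ← Finset.prod_mul_distrib]
    rw [← Equiv.prod_comp ((Fin.revPerm : Equiv.Perm (Fin k)).trans (Tuple.sort hW.eigenvalues))
      (fun i : Fin k => (X : ℂ[X]) ^ 2 - C ((hW.eigenvalues i : ℝ) : ℂ))]
    apply Finset.prod_congr rfl
    intro i _
    have : ((hW.eigenvalues (((Fin.revPerm : Equiv.Perm (Fin k)).trans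
        (Tuple.sort hW.eigenvalues)) i) : ℝ) : ℂ) = ((s i : ℝ) : ℂ) ^ 2 := by
      rw [← heigW, hs_eq]
      rw [← Complex.ofReal_pow, Real.sq_sqrt (heigW_nonneg i)]
    rw [this]
    have hcs : C (((s i : ℝ) : ℂ) ^ 2) = (C ((s i : ℝ) : ℂ)) ^ 2 := by
      rw [map_pow]
    rw [hcs]
    ring
  exact aux_eigVec_eq hH hvA hprod

theorem stmt_11 (p q : ℕ) (hq : 1 ≤ q) (hpq : q ≤ p)
    (X : Matrix (Fin (p + q)) (Fin (p + q)) ℂ) :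
    (hatPQ (p + q) (p + q) (fun i => sval X (i : ℕ)) ∘
        Fin.cast (show p + p + (q + q) = p + q + (p + q) by ring),
      hatPQ p p (fun i => sval (blockTL p q X) (i : ℕ)),
      hatPQ q q (fun i => sval (blockBR p q X) (i : ℕ))) ∈ LRcone (p + p) (q + q) := by
  classical
  set TL : Matrix (Fin p) (Fin p) ℂ := blockTL p q X with hTL
  set BR : Matrix (Fin q) (Fin q) ℂ := blockBR p q X with hBR
  set F : (Fin p ⊕ Fin q) ⊕ (Fin p ⊕ Fin q) ≃ Fin (p + q) ⊕ Fin (p + q) :=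
    Equiv.sumCongr finSumFinEquiv finSumFinEquiv with hF
  set E : (Fin p ⊕ Fin q) ⊕ (Fin p ⊕ Fin q) ≃ Fin (p + p + (q + q)) :=
    (Equiv.sumSumSumComm (Fin p) (Fin q) (Fin p) (Fin q)).trans
      ((Equiv.sumCongr finSumFinEquiv finSumFinEquiv).trans finSumFinEquiv) with hE
  set N : Matrix ((Fin p ⊕ Fin q) ⊕ (Fin p ⊕ Fin q)) ((Fin p ⊕ Fin q) ⊕ (Fin p ⊕ Fin q)) ℂ :=
    (Matrix.fromBlocks 0 X Xᴴ 0).submatrix F F with hN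
  set M : Matrix (Fin (p + p + (q + q))) (Fin (p + p + (q + q))) ℂ :=
    N.submatrix E.symm E.symm with hMdef
  have hblocks : (Matrix.fromBlocks 0 X Xᴴ 0 :
      Matrix (Fin (p + q) ⊕ Fin (p + q)) (Fin (p + q) ⊕ Fin (p + q)) ℂ).IsHermitian := by
    unfold Matrix.IsHermitian
    rw [Matrix.fromBlocks_conjTranspose]
    simp
  have hNh : N.IsHermitian := hblocks.submatrix F
  have hMh : M.IsHermitian := hNh.submatrix E.symm
  -- structural computations for the two diagonal blocks
  have hEleft : ∀ x : Fin p ⊕ Fin p,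
      E (Sum.elim (Sum.inl ∘ Sum.inl) (Sum.inr ∘ Sum.inl) x)
        = Fin.castAdd (q + q) (finSumFinEquiv x) := by
    intro x
    rcases x with a | a <;>
      simp [hE, Equiv.sumSumSumComm, Equiv.sumAssoc, Equiv.sumComm, finSumFinEquiv_apply_left,
        finSumFinEquiv_apply_right] <;> rfl
  have hEright : ∀ x : Fin q ⊕ Fin q,
      E (Sum.elim (Sum.inl ∘ Sum.inr) (Sum.inr ∘ Sum.inr) x)
        = Fin.natAdd (p + p) (finSumFinEquiv x) := by
    intro x
    rcases x with a | a <;>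
      simp [hE, Equiv.sumSumSumComm, Equiv.sumAssoc, Equiv.sumComm, finSumFinEquiv_apply_left,
        finSumFinEquiv_apply_right] <;> rfl
  have hsubL : M.submatrix (Fin.castAdd (q + q)) (Fin.castAdd (q + q))
      = (Matrix.fromBlocks 0 TL TLᴴ 0).submatrix
          (⇑(finSumFinEquiv (m := p) (n := p)).symm) ⇑(finSumFinEquiv (m := p) (n := p)).symm := by
    ext i j
    have hi := hEleft (finSumFinEquiv.symm i)
    have hj := hEleft (finSumFinEquiv.symm j)
    rw [Equiv.apply_symm_apply] at hi hj
    have hLi : E.symm (Fin.castAdd (q + q) i)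
        = Sum.elim (Sum.inl ∘ Sum.inl) (Sum.inr ∘ Sum.inl) (finSumFinEquiv.symm i) := by
      rw [← hi, Equiv.symm_apply_apply]
    have hLj : E.symm (Fin.castAdd (q + q) j)
        = Sum.elim (Sum.inl ∘ Sum.inl) (Sum.inr ∘ Sum.inl) (finSumFinEquiv.symm j) := by
      rw [← hj, Equiv.symm_apply_apply]
    simp only [hMdef, Matrix.submatrix_apply, hLi, hLj]
    rcases finSumFinEquiv.symm i with a | a <;> rcases finSumFinEquiv.symm j with b | b <;>
      simp [hN, hF, hTL, blockTL, Matrix.conjTranspose_apply, finSumFinEquiv_apply_left]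
  have hsubR : M.submatrix (Fin.natAdd (p + p)) (Fin.natAdd (p + p))
      = (Matrix.fromBlocks 0 BR BRᴴ 0).submatrix
          (⇑(finSumFinEquiv (m := q) (n := q)).symm) ⇑(finSumFinEquiv (m := q) (n := q)).symm := by
    ext i j
    have hi := hEright (finSumFinEquiv.symm i)
    have hj := hEright (finSumFinEquiv.symm j)
    rw [Equiv.apply_symm_apply] at hi hj
    have hLi : E.symm (Fin.natAdd (p + p) i)
        = Sum.elim (Sum.inl ∘ Sum.inr) (Sum.inr ∘ Sum.inr) (finSumFinEquiv.symm i) := by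
      rw [← hi, Equiv.symm_apply_apply]
    have hLj : E.symm (Fin.natAdd (p + p) j)
        = Sum.elim (Sum.inl ∘ Sum.inr) (Sum.inr ∘ Sum.inr) (finSumFinEquiv.symm j) := by
      rw [← hj, Equiv.symm_apply_apply]
    simp only [hMdef, Matrix.submatrix_apply, hLi, hLj]
    rcases finSumFinEquiv.symm i with a | a <;> rcases finSumFinEquiv.symm j with b | b <;>
      simp [hN, hF, hBR, blockBR, Matrix.conjTranspose_apply, finSumFinEquiv_apply_right]
  refine ⟨M, hMh, ?_, ?_, ?_⟩
  · -- the big matrix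
    have hre : M.charpoly = (Matrix.fromBlocks 0 X Xᴴ 0).charpoly := by
      have e1 : M = Matrix.reindex E E N := rfl
      have e2 : N = Matrix.reindex F.symm F.symm (Matrix.fromBlocks 0 X Xᴴ 0) := rfl
      rw [e1, Matrix.charpoly_reindex, e2, Matrix.charpoly_reindex]
    exact (aux_key (by ring) X M hMh (hre.trans (aux_charpoly_blocks X))).symm
  · -- top-left block
    have hre : (M.submatrix (Fin.castAdd (q + q)) (Fin.castAdd (q + q))).charpoly
        = (Matrix.fromBlocks 0 TL TLᴴ 0).charpoly := by
      rw [hsubL]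
      have e1 : (Matrix.fromBlocks 0 TL TLᴴ 0).submatrix
            (⇑(finSumFinEquiv (m := p) (n := p)).symm) ⇑(finSumFinEquiv (m := p) (n := p)).symm
          = Matrix.reindex finSumFinEquiv finSumFinEquiv (Matrix.fromBlocks 0 TL TLᴴ 0) := rfl
      rw [e1, Matrix.charpoly_reindex]
    have hk := aux_key (rfl : p + p = p + p) TL
      (M.submatrix (Fin.castAdd (q + q)) (Fin.castAdd (q + q)))
      (hMh.submatrix (Fin.castAdd (q + q))) (hre.trans (aux_charpoly_blocks TL))
    exact (hk.trans (funext fun j => rfl)).symm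
  · -- bottom-right block
    have hre : (M.submatrix (Fin.natAdd (p + p)) (Fin.natAdd (p + p))).charpoly
        = (Matrix.fromBlocks 0 BR BRᴴ 0).charpoly := by
      rw [hsubR]
      have e1 : (Matrix.fromBlocks 0 BR BRᴴ 0).submatrix
            (⇑(finSumFinEquiv (m := q) (n := q)).symm) ⇑(finSumFinEquiv (m := q) (n := q)).symm
          = Matrix.reindex finSumFinEquiv finSumFinEquiv (Matrix.fromBlocks 0 BR BRᴴ 0) := rfl
      rw [e1, Matrix.charpoly_reindex]
    have hk := aux_key (rfl : q + q = q + q) BR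
      (M.submatrix (Fin.natAdd (p + p)) (Fin.natAdd (p + p)))
      (hMh.submatrix (Fin.natAdd (p + p))) (hre.trans (aux_charpoly_blocks BR))
    exact (hk.trans (funext fun j => rfl)).symm
end

section
/- (Thompson interlacing) Let N ≥ 2, let X be an N×N complex matrix with singular values γ₁ ≥ … ≥ γ_N ≥ 0, and let X' be the (N−1)×(N−1) matrix obtained from X by deleting one row and one column, with singular values s₁ ≥ … ≥ s_{N−1} ≥ 0. Then s_k ≤ γ_k for all 1 ≤ k ≤ N−1, and γ_{k+2} ≤ s_k for all 1 ≤ k ≤ N−2. -/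
open Matrix

namespace TIL
noncomputable section
open Module Submodule

def quad {n : ℕ} (A : Matrix (Fin n) (Fin n) ℂ) (x : Fin n → ℂ) : ℝ :=
  Complex.re (dotProduct (star x) (A *ᵥ x))

variable {n : ℕ} {A : Matrix (Fin n) (Fin n) ℂ}

lemma norm_sq_eq {m : ℕ} (x : EuclideanSpace ℂ (Fin m)) :
    ‖x‖ ^ 2 = Complex.re (dotProduct (star (x : Fin m → ℂ)) (x : Fin m → ℂ)) := by
  rw [← inner_self_eq_norm_sq (𝕜 := ℂ) x, EuclideanSpace.inner_eq_star_dotProduct, dotProduct_comm]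
  rfl

def sbasis (hA : A.IsHermitian) : OrthonormalBasis (Fin n) ℂ (EuclideanSpace ℂ (Fin n)) :=
  hA.eigenvectorBasis.reindex ((Fin.revPerm.trans (Tuple.sort hA.eigenvalues : Equiv.Perm (Fin n))).symm)
lemma sbasis_apply (hA : A.IsHermitian) (i : Fin n) :
    sbasis hA i = hA.eigenvectorBasis (Tuple.sort hA.eigenvalues i.rev) := by simp [sbasis]
lemma mulVec_sbasis (hA : A.IsHermitian) (i : Fin n) :
    A *ᵥ ⇑(sbasis hA i) = (eigVec A hA i) • ⇑(sbasis hA i) := by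
  rw [sbasis_apply]; exact hA.mulVec_eigenvectorBasis _

lemma toEuclideanLin_sbasis (hA : A.IsHermitian) (i : Fin n) :
    Matrix.toEuclideanLin A (sbasis hA i) = (eigVec A hA i) • (sbasis hA i) := by
  have := mulVec_sbasis hA i
  simp only [Matrix.toEuclideanLin_apply]
  exact congrArg (WithLp.equiv 2 _).symm this

lemma quad_eq_inner (x : EuclideanSpace ℂ (Fin n)) :
    quad A x = Complex.re (inner ℂ x (Matrix.toEuclideanLin A x) : ℂ) := by
  rw [quad, EuclideanSpace.inner_eq_star_dotProduct, dotProduct_comm]; rfl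

lemma norm_sq_eq_sum (b : OrthonormalBasis (Fin n) ℂ (EuclideanSpace ℂ (Fin n)))
    (x : EuclideanSpace ℂ (Fin n)) : ‖x‖ ^ 2 = ∑ i, ‖b.repr x i‖ ^ 2 := by
  rw [← b.repr.norm_map x, EuclideanSpace.norm_eq, Real.sq_sqrt (by positivity)]

lemma quad_eq_sum (hA : A.IsHermitian) (x : EuclideanSpace ℂ (Fin n)) :
    quad A x = ∑ i, eigVec A hA i * ‖(sbasis hA).repr x i‖ ^ 2 := by
  set b := sbasis hA with hb
  set T := Matrix.toEuclideanLin A with hT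
  have hsym : T.IsSymmetric := Matrix.isHermitian_iff_isSymmetric.1 hA
  have key : ∀ i, (inner ℂ (b i) (T x) : ℂ) = (eigVec A hA i : ℂ) * inner ℂ (b i) x := by
    intro i
    rw [← hsym (b i) x, toEuclideanLin_sbasis hA i, RCLike.real_smul_eq_coe_smul (K := ℂ),
      inner_smul_left]
    simp [hb]
  rw [quad_eq_inner, ← OrthonormalBasis.sum_inner_mul_inner b x (T x)]
  rw [Complex.re_sum]
  refine Finset.sum_congr rfl fun i _ => ?_
  rw [key i, OrthonormalBasis.repr_apply_apply, ← inner_conj_symm x (b i)]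
  set z : ℂ := inner ℂ (b i) x with hz
  have h1 : (starRingEnd ℂ) z * ((eigVec A hA i : ℂ) * z) = (eigVec A hA i : ℂ) * ((Complex.normSq z : ℝ) : ℂ) := by
    rw [← Complex.mul_conj]; ring
  rw [h1]
  simp [Complex.normSq_eq_norm_sq, ← Complex.ofReal_pow]

lemma eigVec_anti (hA : A.IsHermitian) : Antitone (eigVec A hA) := by
  intro i j hij
  exact Tuple.monotone_sort hA.eigenvalues (Fin.rev_le_rev.mpr hij)

lemma repr_eq_zero (hA : A.IsHermitian) {S : Set (Fin n)} {x : EuclideanSpace ℂ (Fin n)}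
    (hx : x ∈ Submodule.span ℂ (⇑(sbasis hA) '' S)) {i : Fin n} (hi : i ∉ S) :
    (sbasis hA).repr x i = 0 := by
  rw [OrthonormalBasis.repr_apply_apply]
  have hle : Submodule.span ℂ (⇑(sbasis hA) '' S) ≤
      LinearMap.ker ((innerSL ℂ ((sbasis hA) i)) : EuclideanSpace ℂ (Fin n) →L[ℂ] ℂ).toLinearMap := by
    rw [Submodule.span_le]
    rintro _ ⟨j, hj, rfl⟩
    simp only [SetLike.mem_coe, LinearMap.mem_ker, ContinuousLinearMap.coe_coe, innerSL_apply_apply]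
    exact (sbasis hA).orthonormal.2 (fun h : i = j => hi (h ▸ hj))
  exact hle hx

lemma finrank_span_image (hA : A.IsHermitian) (S : Finset (Fin n)) :
    finrank ℂ (Submodule.span ℂ (⇑(sbasis hA) '' ↑S)) = S.card := by
  classical
  set b := sbasis hA
  have hb : LinearIndependent ℂ ⇑b := by
    have := b.toBasis.linearIndependent
    rwa [OrthonormalBasis.coe_toBasis] at this
  have hinj : Function.Injective ⇑b := hb.injective
  have h2 : LinearIndependent ℂ (⇑b ∘ ((↑) : {i // i ∈ S} → Fin n)) :=
    hb.comp _ Subtype.val_injective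
  have hset : ⇑b '' ↑S = Set.range (⇑b ∘ ((↑) : {i // i ∈ S} → Fin n)) := by
    rw [Set.range_comp]
    ext j
    simp
  rw [hset, finrank_span_eq_card h2, Fintype.card_coe]

def topSet (n m : ℕ) (h : m ≤ n) : Finset (Fin n) := Finset.univ.image (Fin.castLE h)

lemma mem_topSet {m : ℕ} (h : m ≤ n) {i : Fin n} : i ∈ topSet n m h ↔ (i : ℕ) < m := by
  simp only [topSet, Finset.mem_image, Finset.mem_univ, true_and, Fin.ext_iff]
  exact ⟨fun ⟨j, hj⟩ => hj ▸ j.isLt, fun hlt => ⟨⟨i, hlt⟩, rfl⟩⟩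

lemma card_topSet {m : ℕ} (h : m ≤ n) : (topSet n m h).card = m := by
  rw [topSet, Finset.card_image_of_injective _ (Fin.castLE_injective h)]
  simp

lemma quad_le_on_span (hA : A.IsHermitian) (S : Finset (Fin n)) (r : ℝ)
    (hr : ∀ i ∈ S, eigVec A hA i ≤ r) {x : EuclideanSpace ℂ (Fin n)}
    (hx : x ∈ Submodule.span ℂ (⇑(sbasis hA) '' ↑S)) :
    quad A x ≤ r * ‖x‖ ^ 2 := by
  rw [quad_eq_sum hA, norm_sq_eq_sum (sbasis hA), Finset.mul_sum]
  refine Finset.sum_le_sum fun i _ => ?_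
  by_cases hi : i ∈ S
  · exact mul_le_mul_of_nonneg_right (hr i hi) (by positivity)
  · rw [repr_eq_zero hA hx hi]; simp

lemma quad_ge_on_span (hA : A.IsHermitian) (S : Finset (Fin n)) (r : ℝ)
    (hr : ∀ i ∈ S, r ≤ eigVec A hA i) {x : EuclideanSpace ℂ (Fin n)}
    (hx : x ∈ Submodule.span ℂ (⇑(sbasis hA) '' ↑S)) :
    r * ‖x‖ ^ 2 ≤ quad A x := by
  rw [quad_eq_sum hA, norm_sq_eq_sum (sbasis hA), Finset.mul_sum]
  refine Finset.sum_le_sum fun i _ => ?_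
  by_cases hi : i ∈ S
  · exact mul_le_mul_of_nonneg_right (hr i hi) (by positivity)
  · rw [repr_eq_zero hA hx hi]; simp

/-- top-`m` eigenspace span -/
def Vtop (hA : A.IsHermitian) (m : ℕ) (h : m ≤ n) : Submodule ℂ (EuclideanSpace ℂ (Fin n)) :=
  Submodule.span ℂ (⇑(sbasis hA) '' ↑(topSet n m h))

lemma finrank_Vtop (hA : A.IsHermitian) (m : ℕ) (h : m ≤ n) :
    finrank ℂ (Vtop hA m h) = m := by
  rw [Vtop, finrank_span_image, card_topSet]

lemma Vtop_quad_ge (hA : A.IsHermitian) (k : Fin n) {x : EuclideanSpace ℂ (Fin n)}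
    (hx : x ∈ Vtop hA ((k : ℕ) + 1) k.isLt) :
    eigVec A hA k * ‖x‖ ^ 2 ≤ quad A x := by
  refine quad_ge_on_span hA _ _ (fun i hi => ?_) hx
  refine eigVec_anti hA ?_
  have := (mem_topSet _).mp hi
  exact Fin.le_def.mpr (by omega)

lemma exists_quad_le (hA : A.IsHermitian) (k : Fin n)
    (V : Submodule ℂ (EuclideanSpace ℂ (Fin n))) (hV : (k : ℕ) + 1 ≤ finrank ℂ V) :
    ∃ x, x ∈ V ∧ x ≠ 0 ∧ quad A x ≤ eigVec A hA k * ‖x‖ ^ 2 := by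
  classical
  set S := (topSet n k (le_of_lt k.isLt))ᶜ with hS
  set L := Submodule.span ℂ (⇑(sbasis hA) '' ↑S) with hL
  have hLrk : finrank ℂ L = n - (k : ℕ) := by
    rw [hL, finrank_span_image, hS, Finset.card_compl, card_topSet]
    simp
  have hkn : (k : ℕ) < n := k.isLt
  have h1 := Submodule.finrank_sup_add_finrank_inf_eq V L
  have h2 : finrank ℂ ↥(V ⊔ L) ≤ n := by
    have := Submodule.finrank_le (V ⊔ L)
    rwa [finrank_euclideanSpace_fin] at this
  have hVL : 0 < finrank ℂ ↥(V ⊓ L) := by omega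
  obtain ⟨x, hx0⟩ := Module.finrank_pos_iff_exists_ne_zero.mp hVL
  have hxmem := x.2
  rw [Submodule.mem_inf] at hxmem
  refine ⟨x, hxmem.1, ?_, ?_⟩
  · exact fun h => hx0 (Subtype.ext h)
  · refine quad_le_on_span hA S _ (fun i hi => ?_) hxmem.2
    refine eigVec_anti hA ?_
    rw [hS, Finset.mem_compl, mem_topSet] at hi
    exact Fin.le_def.mpr (by omega)

lemma le_eigVec (hA : A.IsHermitian) (k : Fin n) (r : ℝ)
    (V : Submodule ℂ (EuclideanSpace ℂ (Fin n))) (hV : (k : ℕ) + 1 ≤ finrank ℂ V)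
    (h : ∀ x, x ∈ V → r * ‖x‖ ^ 2 ≤ quad A x) : r ≤ eigVec A hA k := by
  obtain ⟨x, hxV, hx0, hq⟩ := exists_quad_le hA k V hV
  have hn : (0 : ℝ) < ‖x‖ ^ 2 := by
    have : 0 < ‖x‖ := norm_pos_iff.mpr hx0
    positivity
  nlinarith [h x hxV]

lemma toEuclideanLin_coe {a b : ℕ} (P : Matrix (Fin a) (Fin b) ℂ) (x : EuclideanSpace ℂ (Fin b)) :
    (Matrix.toEuclideanLin P x : Fin a → ℂ) = P *ᵥ x := rfl

lemma quad_comp {a b : ℕ} (A : Matrix (Fin a) (Fin a) ℂ) (P : Matrix (Fin a) (Fin b) ℂ)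
    (x : Fin b → ℂ) : quad (Pᴴ * A * P) x = quad A (P *ᵥ x) := by
  unfold quad
  rw [← Matrix.mulVec_mulVec, ← Matrix.mulVec_mulVec, Matrix.dotProduct_mulVec (star x) Pᴴ,
    ← Matrix.star_mulVec]

lemma dot_self_comp {a b : ℕ} (P : Matrix (Fin a) (Fin b) ℂ) (hP : Pᴴ * P = 1)
    (x : Fin b → ℂ) :
    dotProduct (star (P *ᵥ x)) (P *ᵥ x) = dotProduct (star x) x := by
  rw [Matrix.star_mulVec, Matrix.dotProduct_mulVec, Matrix.vecMul_vecMul, hP, Matrix.vecMul_one]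

lemma norm_comp {a b : ℕ} (P : Matrix (Fin a) (Fin b) ℂ) (hP : Pᴴ * P = 1)
    (x : EuclideanSpace ℂ (Fin b)) : ‖Matrix.toEuclideanLin P x‖ = ‖x‖ := by
  have h : ‖Matrix.toEuclideanLin P x‖ ^ 2 = ‖x‖ ^ 2 := by
    rw [norm_sq_eq, norm_sq_eq x, toEuclideanLin_coe, dot_self_comp P hP]
  have h2 := congrArg Real.sqrt h
  rwa [Real.sqrt_sq (norm_nonneg _), Real.sqrt_sq (norm_nonneg _)] at h2

lemma inj_comp {a b : ℕ} (P : Matrix (Fin a) (Fin b) ℂ) (hP : Pᴴ * P = 1) :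
    Function.Injective (Matrix.toEuclideanLin P) := by
  intro u v huv
  have h : ‖u - v‖ = 0 := by
    rw [← norm_comp P hP, map_sub, huv, sub_self, norm_zero]
  exact sub_eq_zero.mp (norm_eq_zero.mp h)

/-- E1: Loewner monotonicity -/
lemma eig_le_of_quad_le {B M : Matrix (Fin n) (Fin n) ℂ} (hB : B.IsHermitian)
    (hM : M.IsHermitian) (h : ∀ x : Fin n → ℂ, quad B x ≤ quad M x) (k : Fin n) :
    eigVec B hB k ≤ eigVec M hM k := by
  refine le_eigVec hM k _ (Vtop hB ((k : ℕ) + 1) k.isLt) (by rw [finrank_Vtop]) ?_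
  intro x hx
  exact (Vtop_quad_ge hB k hx).trans (h x)

/-- E2 upper: Cauchy interlacing, upper -/
lemma eig_submatrix_le {A : Matrix (Fin (n+1)) (Fin (n+1)) ℂ} {M : Matrix (Fin n) (Fin n) ℂ}
    (hA : A.IsHermitian) (hM : M.IsHermitian) (P : Matrix (Fin (n+1)) (Fin n) ℂ)
    (hP : Pᴴ * P = 1) (hMP : M = Pᴴ * A * P) (k : ℕ) (hk : k < n) :
    eigVec M hM ⟨k, hk⟩ ≤ eigVec A hA ⟨k, by omega⟩ := by
  set φ := Matrix.toEuclideanLin P with hφ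
  set W := Vtop hM (k + 1) hk with hW
  set V := Submodule.map φ W with hV
  have hrk : finrank ℂ V = k + 1 := by
    rw [hV, ← LinearEquiv.finrank_eq (W.equivMapOfInjective φ (inj_comp P hP)), hW, finrank_Vtop]
  refine le_eigVec hA _ _ V (by rw [hrk]) ?_
  rintro y hy
  rw [hV, Submodule.mem_map] at hy
  obtain ⟨x, hx, rfl⟩ := hy
  have h1 : quad M x = quad A (φ x) := by
    rw [hMP, quad_comp]
    rfl
  rw [norm_comp P hP, ← h1]
  exact Vtop_quad_ge hM ⟨k, hk⟩ hx

/-- E2 lower: Cauchy interlacing, lower -/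
lemma eig_le_eig_submatrix {A : Matrix (Fin (n+1)) (Fin (n+1)) ℂ} {M : Matrix (Fin n) (Fin n) ℂ}
    (hA : A.IsHermitian) (hM : M.IsHermitian) (P : Matrix (Fin (n+1)) (Fin n) ℂ)
    (hP : Pᴴ * P = 1) (hMP : M = Pᴴ * A * P) (k : ℕ) (hk : k < n) :
    eigVec A hA ⟨k + 1, by omega⟩ ≤ eigVec M hM ⟨k, hk⟩ := by
  set φ := Matrix.toEuclideanLin P with hφ
  set W := Vtop hA (k + 1 + 1) (by omega) with hW
  set V := Submodule.comap φ W with hV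
  have hmap : Submodule.map φ V = LinearMap.range φ ⊓ W := Submodule.map_comap_eq φ W
  have hrange : finrank ℂ (LinearMap.range φ) = n := by
    rw [LinearMap.finrank_range_of_inj (inj_comp P hP), finrank_euclideanSpace_fin]
  have h1 := Submodule.finrank_sup_add_finrank_inf_eq (LinearMap.range φ) W
  have h2 : finrank ℂ ↥(LinearMap.range φ ⊔ W) ≤ n + 1 := by
    have := Submodule.finrank_le (LinearMap.range φ ⊔ W)
    rwa [finrank_euclideanSpace_fin] at this
  have hWrk : finrank ℂ W = k + 1 + 1 := by rw [hW, finrank_Vtop]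
  have h3 : finrank ℂ (Submodule.map φ V) ≤ finrank ℂ V := Submodule.finrank_map_le φ V
  rw [hmap] at h3
  refine le_eigVec hM ⟨k, hk⟩ _ V (by show k + 1 ≤ _; omega) ?_
  intro x hx
  have hφx : φ x ∈ W := Submodule.mem_comap.mp hx
  have h4 := Vtop_quad_ge hA ⟨k + 1, by omega⟩ hφx
  have h5 : quad M x = quad A (φ x) := by
    rw [hMP, quad_comp]
    rfl
  rw [← norm_comp P hP x, h5]
  exact h4

/-- E3: rank-one interlacing, lower -/
lemma eig_succ_le_rank_one {M B : Matrix (Fin n) (Fin n) ℂ} (hM : M.IsHermitian)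
    (hB : B.IsHermitian) (w : Fin n → ℂ)
    (h : ∀ x : Fin n → ℂ, dotProduct (star w) x = 0 → quad M x = quad B x)
    (k : ℕ) (hk : k + 1 < n) :
    eigVec M hM ⟨k + 1, hk⟩ ≤ eigVec B hB ⟨k, by omega⟩ := by
  set wE : EuclideanSpace ℂ (Fin n) := (WithLp.equiv 2 (Fin n → ℂ)).symm w with hwE
  set f : EuclideanSpace ℂ (Fin n) →ₗ[ℂ] ℂ := (innerSL ℂ wE).toLinearMap with hf
  have hker : n - 1 ≤ finrank ℂ (LinearMap.ker f) := by
    have h1 := LinearMap.finrank_range_add_finrank_ker f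
    rw [finrank_euclideanSpace_fin] at h1
    have h2 : finrank ℂ (LinearMap.range f) ≤ 1 := by
      have := Submodule.finrank_le (LinearMap.range f)
      rwa [Module.finrank_self] at this
    omega
  set W := Vtop hM (k + 1 + 1) hk with hW
  set V := W ⊓ LinearMap.ker f with hV
  have hWrk : finrank ℂ W = k + 1 + 1 := by rw [hW, finrank_Vtop]
  have h1 := Submodule.finrank_sup_add_finrank_inf_eq W (LinearMap.ker f)
  have h2 : finrank ℂ ↥(W ⊔ LinearMap.ker f) ≤ n := by
    have := Submodule.finrank_le (W ⊔ LinearMap.ker f)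
    rwa [finrank_euclideanSpace_fin] at this
  refine le_eigVec hB ⟨k, by omega⟩ _ V (by show k + 1 ≤ _; rw [hV]; omega) ?_
  intro x hx
  rw [hV, Submodule.mem_inf] at hx
  have hdot : dotProduct (star w) x = 0 := by
    have := hx.2
    rw [LinearMap.mem_ker] at this
    simp [hf, hwE] at this
    rw [EuclideanSpace.inner_eq_star_dotProduct, dotProduct_comm] at this
    exact this
  rw [← h x hdot]
  exact Vtop_quad_ge hM ⟨k + 1, hk⟩ hx.1

lemma oneSub_mul {m r c : ℕ} (M : Matrix (Fin m) (Fin c) ℂ) (f : Fin r → Fin m) :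
    (1 : Matrix (Fin m) (Fin m) ℂ).submatrix f id * M = M.submatrix f id := by
  ext a j
  simp [Matrix.mul_apply, Matrix.one_apply]

lemma mul_oneSub {a m r : ℕ} (M : Matrix (Fin a) (Fin m) ℂ) (f : Fin r → Fin m) :
    M * (1 : Matrix (Fin m) (Fin m) ℂ).submatrix id f = M.submatrix id f := by
  ext i b
  simp [Matrix.mul_apply, Matrix.one_apply]

lemma oneSub_conjTranspose {m r : ℕ} (f : Fin r → Fin m) :
    ((1 : Matrix (Fin m) (Fin m) ℂ).submatrix id f)ᴴ
      = (1 : Matrix (Fin m) (Fin m) ℂ).submatrix f id := by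
  ext a j
  simp [Matrix.conjTranspose_apply, Matrix.one_apply, eq_comm]

lemma P_orth {m r : ℕ} (f : Fin r → Fin m) (hf : Function.Injective f) :
    ((1 : Matrix (Fin m) (Fin m) ℂ).submatrix id f)ᴴ
      * (1 : Matrix (Fin m) (Fin m) ℂ).submatrix id f = 1 := by
  rw [oneSub_conjTranspose, oneSub_mul]
  ext a b
  simp [Matrix.one_apply, Matrix.submatrix_apply, hf.eq_iff]

lemma P_conj {m r : ℕ} (A : Matrix (Fin m) (Fin m) ℂ) (f : Fin r → Fin m) :
    ((1 : Matrix (Fin m) (Fin m) ℂ).submatrix id f)ᴴ * A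
      * (1 : Matrix (Fin m) (Fin m) ℂ).submatrix id f = A.submatrix f f := by
  rw [oneSub_conjTranspose, oneSub_mul, mul_oneSub]
  rfl

lemma quad_add {n : ℕ} (B C : Matrix (Fin n) (Fin n) ℂ) (x : Fin n → ℂ) :
    quad (B + C) x = quad B x + quad C x := by
  unfold quad
  rw [Matrix.add_mulVec, dotProduct_add, Complex.add_re]

lemma quad_vecMulVec {m : ℕ} (w x : Fin m → ℂ) :
    quad (Matrix.vecMulVec w (star w)) x
      = Complex.normSq (dotProduct (star w) x) := by
  unfold quad
  have h1 : Matrix.vecMulVec w (star w) *ᵥ x = (dotProduct (star w) x) • w := by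
    ext i
    simp only [Matrix.mulVec, Matrix.vecMulVec_apply, dotProduct, Pi.smul_apply,
      smul_eq_mul, Finset.sum_mul, Pi.star_apply]
    refine Finset.sum_congr rfl fun j _ => ?_
    ring
  rw [h1, dotProduct_smul]
  have h2 : dotProduct (star x) w
      = (starRingEnd ℂ) (dotProduct (star w) x) := by
    rw [dotProduct, dotProduct, map_sum]
    refine Finset.sum_congr rfl fun j _ => ?_
    simp [mul_comm]
  rw [h2, smul_eq_mul, Complex.mul_conj]
  simp

lemma submatrix_mul_conj {N : ℕ} (X : Matrix (Fin (N + 1)) (Fin (N + 1)) ℂ)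
    (i0 j0 : Fin (N + 1)) :
    (X * Xᴴ).submatrix i0.succAbove i0.succAbove
      = (X.submatrix i0.succAbove j0.succAbove) * (X.submatrix i0.succAbove j0.succAbove)ᴴ
        + Matrix.vecMulVec (fun a => X (i0.succAbove a) j0)
            (star fun a => X (i0.succAbove a) j0) := by
  ext a b
  simp only [Matrix.submatrix_apply, Matrix.mul_apply, Matrix.conjTranspose_apply,
    Matrix.add_apply, Matrix.vecMulVec_apply, Pi.star_apply]
  rw [Fin.sum_univ_succAbove (fun c => X (i0.succAbove a) c * star (X (i0.succAbove b) c)) j0]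
  ring
end
end TIL

/-- Thompson interlacing -/
theorem stmt_17 (N : ℕ) (hN : 1 ≤ N)
    (X : Matrix (Fin (N + 1)) (Fin (N + 1)) ℂ) (i0 j0 : Fin (N + 1)) :
    (∀ k : ℕ, k < N → sval (X.submatrix i0.succAbove j0.succAbove) k ≤ sval X k) ∧
    (∀ k : ℕ, k + 1 < N → sval X (k + 2) ≤ sval (X.submatrix i0.succAbove j0.succAbove) k) := by
  classical
  set X' := X.submatrix i0.succAbove j0.succAbove with hX'
  set A := X * Xᴴ with hA'
  have hA : A.IsHermitian := Matrix.isHermitian_mul_conjTranspose_self X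
  set B := X' * X'ᴴ with hB'
  have hB : B.IsHermitian := Matrix.isHermitian_mul_conjTranspose_self X'
  set M := A.submatrix i0.succAbove i0.succAbove with hM'
  have hM : M.IsHermitian := hA.submatrix i0.succAbove
  set P : Matrix (Fin (N + 1)) (Fin N) ℂ :=
    (1 : Matrix (Fin (N + 1)) (Fin (N + 1)) ℂ).submatrix id i0.succAbove with hP'
  have hP1 : Pᴴ * P = 1 := TIL.P_orth _ Fin.succAbove_right_injective
  have hMP : M = Pᴴ * A * P := (TIL.P_conj A i0.succAbove).symm
  set w : Fin N → ℂ := fun a => X (i0.succAbove a) j0 with hw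
  have hMB : M = B + Matrix.vecMulVec w (star w) := TIL.submatrix_mul_conj X i0 j0
  have hquadle : ∀ x : Fin N → ℂ, TIL.quad B x ≤ TIL.quad M x := by
    intro x
    rw [hMB, TIL.quad_add, TIL.quad_vecMulVec]
    have := Complex.normSq_nonneg (dotProduct (star w) x)
    linarith
  have hquadeq : ∀ x : Fin N → ℂ,
      dotProduct (star w) x = 0 → TIL.quad M x = TIL.quad B x := by
    intro x hx
    rw [hMB, TIL.quad_add, TIL.quad_vecMulVec, hx]
    simp
  constructor
  · intro k hk
    have h1 : eigVec B hB ⟨k, hk⟩ ≤ eigVec M hM ⟨k, hk⟩ :=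
      TIL.eig_le_of_quad_le hB hM hquadle ⟨k, hk⟩
    have h2 : eigVec M hM ⟨k, hk⟩ ≤ eigVec A hA ⟨k, by omega⟩ :=
      TIL.eig_submatrix_le hA hM P hP1 hMP k hk
    unfold sval
    rw [dif_pos (show k < N from hk), dif_pos (show k < N + 1 by omega)]
    exact Real.sqrt_le_sqrt (h1.trans h2)
  · intro k hk
    have h1 : eigVec A hA ⟨k + 1 + 1, by omega⟩ ≤ eigVec M hM ⟨k + 1, hk⟩ :=
      TIL.eig_le_eig_submatrix hA hM P hP1 hMP (k + 1) hk
    have h2 : eigVec M hM ⟨k + 1, hk⟩ ≤ eigVec B hB ⟨k, by omega⟩ :=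
      TIL.eig_succ_le_rank_one hM hB w hquadeq k hk
    unfold sval
    rw [dif_pos (show k + 2 < N + 1 by omega), dif_pos (show k < N by omega)]
    exact Real.sqrt_le_sqrt (h1.trans h2)
end
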